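/- arXiv:2508.10969 — 2 statements merged into one kernel-verified Lean document; each statement's English description precedes it below -/
import Mathlib

section
/- Let T be a two-row increasing tableau whose lattice word w satisfies w_1 ≠ ∅ and has no balance point and no teetering point. Then the lattice word of the K-promotion of T is obtained from w by deleting the first letter and appending {1}; if instead w has no balance point but has a teetering point with first teetering point j_t, the new lattice word is obtained by changing w_{j_t} from {1,2} to {1}, deleting the first letter, and appending {1,2}. If w_1 = ∅, the new lattice word is obtained by deleting w_1 and appending ∅. -/
open Classical

/-- A cell `(row, col)` (0-indexed) of a Young diagram. -/
abbrev Cell : Type := ℕ × ℕ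

/-- The cell `c` lies in the Young diagram of the shape `lam`. -/
def inShape (lam : List ℕ) (c : Cell) : Prop := c.2 < lam.getD c.1 0

/-- `lam` is an integer partition (weakly decreasing list of positive parts). -/
def IsPartition (lam : List ℕ) : Prop :=
  lam.Pairwise (· ≥ ·) ∧ ∀ x ∈ lam, 0 < x

/-- An increasing tableau of shape `lam` with entries in `{1,…,q}`
(rows and columns strictly increase); cells outside the shape carry `0`. -/
structure IncTab (lam : List ℕ) (q : ℕ) where
  entry : Cell → ℕ
  entry_pos : ∀ c, inShape lam c → 1 ≤ entry c
  entry_le : ∀ c, inShape lam c → entry c ≤ q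
  row_strict : ∀ i j : ℕ, inShape lam (i, j + 1) → entry (i, j) < entry (i, j + 1)
  col_strict : ∀ i j : ℕ, inShape lam (i + 1, j) → entry (i, j) < entry (i + 1, j)
  zero_outside : ∀ c, ¬ inShape lam c → entry c = 0

/-- A standard Young tableau: a bijective filling by `1, …, n` where `n = |lam|`. -/
def IsStandard (lam : List ℕ) (n : ℕ) (T : IncTab lam n) : Prop :=
  n = lam.sum ∧ ∀ v, 1 ≤ v → v ≤ n → ∃! c, inShape lam c ∧ T.entry c = v

/-- Every value of `{1,…,q}` appears in the tableau. -/
def Packed (lam : List ℕ) (q : ℕ) (T : IncTab lam q) : Prop :=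
  ∀ v, 1 ≤ v → v ≤ q → ∃ c : Cell, inShape lam c ∧ T.entry c = v

/-- During (K-)gromotion, a vacated box is recorded by the value `0` (a "bullet"). -/
def isBullet (lam : List ℕ) (f : Cell → ℕ) (c : Cell) : Prop :=
  inShape lam c ∧ f c = 0

/-- `c` carries value `v` and is adjacent (on its left or above) to a bullet box. -/
def inC (lam : List ℕ) (f : Cell → ℕ) (v : ℕ) (c : Cell) : Prop :=
  inShape lam c ∧ f c = v ∧
    ((1 ≤ c.2 ∧ isBullet lam f (c.1, c.2 - 1)) ∨ (1 ≤ c.1 ∧ isBullet lam f (c.1 - 1, c.2)))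

/-- One K-jeu-de-taquin substep: simultaneously all boxes with value `v` adjacent to a
bullet become bullets, and the bullets adjacent to them receive value `v`. -/
noncomputable def substep (lam : List ℕ) (v : ℕ) (f : Cell → ℕ) : Cell → ℕ :=
  fun c =>
    if inC lam f v c then 0
    else if isBullet lam f c ∧ (inC lam f v (c.1, c.2 + 1) ∨ inC lam f v (c.1 + 1, c.2)) then v
    else f c

/-- The `j`-th value of the cyclically shifted alphabet `(α < α+1 < … < q < 1 < … < α-1)`. -/
def cyc (q α j : ℕ) : ℕ := (α - 1 + j) % q + 1

/-- State of the gromotion slide (at stage `α` of the alphabet cycle) after `j` substeps;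
the base case deletes the minimal letter `α` from the upper-left corner. -/
noncomputable def iterSub (lam : List ℕ) (q α : ℕ) (f : Cell → ℕ) : ℕ → Cell → ℕ
  | 0 => fun c => if c = ((0, 0) : Cell) ∧ f c = α then 0 else f c
  | j + 1 => substep lam (cyc q α (j + 1)) (iterSub lam q α f j)

/-- One application of (K-)gromotion at stage `α`: slide, then fill the vacated boxes
with the removed letter `α` (now maximal in the cycled alphabet). -/
noncomputable def gromote (lam : List ℕ) (q α : ℕ) (f : Cell → ℕ) : Cell → ℕ :=
  fun c =>
    if inShape lam c ∧ iterSub lam q α f (q - 1) c = 0 then α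
    else iterSub lam q α f (q - 1) c

/-- The `k`-th iterate of (K-)gromotion (stages cycle through `1, …, q`). -/
noncomputable def gromIter (lam : List ℕ) (q : ℕ) (f : Cell → ℕ) : ℕ → Cell → ℕ
  | 0 => f
  | k + 1 => gromote lam q (k % q + 1) (gromIter lam q f k)

/-- In state `f`, the value `v` is about to move from row `i+1` to row `i` (1-indexed):
a bullet in (1-indexed) row `i` has the box below it about to slide up with value `v`. -/
def moveAt (lam : List ℕ) (f : Cell → ℕ) (v i : ℕ) : Prop :=
  ∃ c : Cell, isBullet lam f c ∧ c.1 + 1 = i ∧ inC lam f v (c.1 + 1, c.2)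

/-- Edge `α → β` of the `i`-th promotion digraph `prom_i(T)`:
during the `α`-th application of (K-)gromotion, value `β` moves from row `i+1` to row `i`. -/
def promEdge (lam : List ℕ) (q i : ℕ) (T : IncTab lam q) (α β : ℕ) : Prop :=
  1 ≤ α ∧ α ≤ q ∧
  ∃ j : ℕ, j + 1 ≤ q - 1 ∧ cyc q α (j + 1) = β ∧
    moveAt lam (iterSub lam q α (gromIter lam q T.entry (α - 1)) j) β i

/-- (K-)promotion: gromotion at stage `1` followed by the relabeling `v ↦ v - 1`,
with the removed letter (temporarily `1`) becoming `q`. -/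
noncomputable def kpromote (lam : List ℕ) (q : ℕ) (f : Cell → ℕ) : Cell → ℕ :=
  fun c =>
    if inShape lam c then
      (if gromote lam q 1 f c = 1 then q else gromote lam q 1 f c - 1)
    else 0

/-- Value `v` appears in (1-indexed) row `r` of the filling `f`. -/
def appearsRow (lam : List ℕ) (f : Cell → ℕ) (r v : ℕ) : Prop :=
  1 ≤ r ∧ ∃ j : ℕ, inShape lam (r - 1, j) ∧ f (r - 1, j) = v

/-- The letter of the lattice word at position `v`: the set of (1-indexed) rows
containing value `v`. -/
def rowSetW (lam : List ℕ) (f : Cell → ℕ) (v : ℕ) : Set ℕ :=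
  {r | appearsRow lam f r v}

/-- For a standard filling: the (1-indexed) row containing value `v`. -/
noncomputable def latticeRow (lam : List ℕ) (f : Cell → ℕ) (v : ℕ) : ℕ :=
  sInf {r | appearsRow lam f r v}

/-- Number of occurrences of letter `r` among the first `j` letters of the lattice word:
the number of values `v ≤ j` appearing in row `r`. -/
noncomputable def cnt (lam : List ℕ) (f : Cell → ℕ) (r j : ℕ) : ℕ :=
  ((Finset.Icc 1 j).filter fun v => appearsRow lam f r v).card

/-- `j` is a (1-)balance point of the lattice word of a two-row filling. -/
def isBalance (lam : List ℕ) (f : Cell → ℕ) (j : ℕ) : Prop :=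
  cnt lam f 1 j = cnt lam f 2 j

/-- `j` is a (1-)teetering point of the lattice word of a two-row filling. -/
def isTeeter (lam : List ℕ) (f : Cell → ℕ) (j : ℕ) : Prop :=
  appearsRow lam f 1 j ∧ appearsRow lam f 2 j ∧ cnt lam f 1 j = cnt lam f 2 j + 1

/-- A noncrossing perfect matching of `{1,…,n}`, as a symmetric relation. -/
def IsNCMatching (n : ℕ) (M : ℕ → ℕ → Prop) : Prop :=
  (∀ a b, M a b → 1 ≤ a ∧ a ≤ n ∧ 1 ≤ b ∧ b ≤ n ∧ a ≠ b) ∧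
  (∀ a b, M a b → M b a) ∧
  (∀ a, 1 ≤ a → a ≤ n → ∃! b, M a b) ∧
  (∀ a b x y, M a x → M b y → ¬ (a < b ∧ b < x ∧ x < y))

/-- Number of occurrences of letter `r` among positions `a, …, b` of the lattice word
of a standard two-row filling. -/
noncomputable def letterCnt (lam : List ℕ) (f : Cell → ℕ) (r a b : ℕ) : ℕ :=
  ((Finset.Icc a b).filter fun p => latticeRow lam f p = r).card

/-- Positions `a < b` are matched in the noncrossing matching of the lattice word:
`w_a = 1`, `w_b = 2`, the interval `[a,b]` is balanced, and every proper prefix of it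
has strictly more `1`s than `2`s (i.e. `b` is the nearest available `2` for `a`). -/
def matchRel (lam : List ℕ) (f : Cell → ℕ) (a b : ℕ) : Prop :=
  a < b ∧ latticeRow lam f a = 1 ∧ latticeRow lam f b = 2 ∧
  letterCnt lam f 1 a b = letterCnt lam f 2 a b ∧
  ∀ m, a ≤ m → m < b → letterCnt lam f 2 a m < letterCnt lam f 1 a m

/-- The (symmetrized) noncrossing matching associated to a two-row standard filling. -/
def symMatch (lam : List ℕ) (f : Cell → ℕ) (a b : ℕ) : Prop :=
  matchRel lam f a b ∨ matchRel lam f b a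

/-- A noncrossing set partition of `{1,…,q}`, encoded by its "same block" relation. -/
def IsNCPartition (q : ℕ) (R : ℕ → ℕ → Prop) : Prop :=
  (∀ a b, R a b → 1 ≤ a ∧ a ≤ q ∧ 1 ≤ b ∧ b ≤ q) ∧
  (∀ a, 1 ≤ a → a ≤ q → R a a) ∧
  (∀ a b, R a b → R b a) ∧
  (∀ a b c, R a b → R b c → R a c) ∧
  (∀ a b x y, a < x → x < b → b < y → R a b → R x y → R a x)

/-- The defining compatibility between a two-row increasing tableau (given by its
filling `f`) and its noncrossing set partition `R` (Pechenik): singleton blocks are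
the absent values; least elements of nontrivial blocks are the values appearing only
in the top row; greatest elements are the values appearing only in the bottom row;
middle elements are the values appearing in both rows. -/
def BlockCompat (lam : List ℕ) (q : ℕ) (f : Cell → ℕ) (R : ℕ → ℕ → Prop) : Prop :=
  ∀ v, 1 ≤ v → v ≤ q →
    ((∀ u, R v u → u = v) ↔ ¬ ∃ c : Cell, inShape lam c ∧ f c = v) ∧
    (((∃ u, R v u ∧ v < u) ∧ ∀ u, R v u → v ≤ u) ↔
      (appearsRow lam f 1 v ∧ ¬ appearsRow lam f 2 v)) ∧
    (((∃ u, R v u ∧ u < v) ∧ ∀ u, R v u → u ≤ v) ↔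
      (appearsRow lam f 2 v ∧ ¬ appearsRow lam f 1 v)) ∧
    (((∃ u, R v u ∧ u < v) ∧ (∃ u, R v u ∧ v < u)) ↔
      (appearsRow lam f 1 v ∧ appearsRow lam f 2 v))


/- ### Infrastructure -/

lemma inShape_iff (l1 l2 : ℕ) (c : Cell) :
    inShape [l1, l2] c ↔ (c.1 = 0 ∧ c.2 < l1) ∨ (c.1 = 1 ∧ c.2 < l2) := by
  obtain ⟨i, j⟩ := c
  unfold inShape
  match i with
  | 0 => simp
  | 1 => simp
  | (n+2) => simp [List.getD]

lemma nat_eq_of_lt_iff {a b : ℕ} (h : ∀ j, j < a ↔ j < b) : a = b := by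
  rcases lt_trichotomy a b with h' | h' | h'
  · exact absurd ((h a).mpr h') (lt_irrefl a)
  · exact h'
  · exact absurd ((h b).mp h') (lt_irrefl b)

section Row

variable (L : ℕ) (g : ℕ → ℕ)

/-- number of indices `j < L` with `g j ≤ v`. -/
noncomputable def rcnt (v : ℕ) : ℕ := ((Finset.range L).filter (fun j => g j ≤ v)).card

variable (hmono : ∀ j k, j < k → k < L → g j < g k)

include hmono in
lemma rcnt_lt_iff (v j : ℕ) : j < rcnt L g v ↔ j < L ∧ g j ≤ v := by
  have hdc : (Finset.range L).filter (fun j => g j ≤ v) =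
      Finset.range (rcnt L g v) := by
    unfold rcnt
    induction L with
    | zero => simp
    | succ n ih =>
      have hsub : ∀ j k, j < k → k < n → g j < g k := fun j k h1 h2 =>
        hmono j k h1 (Nat.lt_succ_of_lt h2)
      by_cases hg : g n ≤ v
      · have hall : ∀ j ∈ Finset.range (n+1), g j ≤ v := by
          intro j hj
          rcases Nat.lt_succ_iff_lt_or_eq.mp (Finset.mem_range.mp hj) with h | h
          · exact le_of_lt (lt_of_lt_of_le (hmono j n h (Nat.lt_succ_self n)) hg)
          · subst h; exact hg
        rw [Finset.filter_true_of_mem hall]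
        simp
      · have : (Finset.range (n+1)).filter (fun j => g j ≤ v) =
            (Finset.range n).filter (fun j => g j ≤ v) := by
          rw [Finset.range_add_one, Finset.filter_insert, if_neg hg]
        rw [this]
        exact ih hsub
  constructor
  · intro h
    have := Finset.mem_filter.mp (hdc ▸ Finset.mem_range.mpr h)
    exact ⟨Finset.mem_range.mp this.1, this.2⟩
  · intro ⟨h1, h2⟩
    have : j ∈ (Finset.range L).filter (fun j => g j ≤ v) :=
      Finset.mem_filter.mpr ⟨Finset.mem_range.mpr h1, h2⟩
    exact Finset.mem_range.mp (hdc ▸ this)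

include hmono in
lemma rcnt_le (v : ℕ) : rcnt L g v ≤ L := by
  by_contra h
  push_neg at h
  exact absurd ((rcnt_lt_iff L g hmono v L).mp h).1 (lt_irrefl L)

include hmono in
lemma rcnt_pos_last (v : ℕ) (h : 1 ≤ rcnt L g v) :
    rcnt L g v - 1 < L ∧ g (rcnt L g v - 1) ≤ v :=
  (rcnt_lt_iff L g hmono v _).mp (by omega)

include hmono in
lemma rcnt_of_pos (j0 w : ℕ) (hj0 : j0 < L) (hw : g j0 = w) : rcnt L g w = j0 + 1 := by
  apply nat_eq_of_lt_iff
  intro j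
  rw [rcnt_lt_iff L g hmono]
  constructor
  · intro ⟨h1, h2⟩
    by_contra hc
    push_neg at hc
    have := hmono j0 j (by omega) h1
    omega
  · intro h
    refine ⟨by omega, ?_⟩
    rcases Nat.lt_succ_iff_lt_or_eq.mp h with h' | h'
    · exact le_of_lt (by rw [← hw]; exact hmono j j0 h' hj0)
    · subst h'; omega

include hmono in
/-- value `w = v+1` in the row: characterization via `rcnt`. -/
lemma rcnt_succ_mem (v : ℕ) (h : rcnt L g v < L) (hval : g (rcnt L g v) = v + 1) :
    rcnt L g (v+1) = rcnt L g v + 1 :=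
  rcnt_of_pos L g hmono _ _ h hval

include hmono in
lemma rcnt_succ_not_mem (v : ℕ) (h : ¬ (rcnt L g v < L ∧ g (rcnt L g v) = v + 1)) :
    rcnt L g (v+1) = rcnt L g v := by
  apply nat_eq_of_lt_iff
  intro j
  rw [rcnt_lt_iff L g hmono, rcnt_lt_iff L g hmono]
  constructor
  · rintro ⟨h1, h2⟩
    refine ⟨h1, ?_⟩
    rcases Nat.lt_succ_iff_lt_or_eq.mp (Nat.lt_succ_of_le h2) with h' | h'
    · omega
    · exfalso
      -- g j = v + 1
      have hj : ¬ j < rcnt L g v := by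
        intro hc
        have := ((rcnt_lt_iff L g hmono v j).mp hc).2
        omega
      push_neg at hj
      rcases Nat.eq_or_lt_of_le hj with he | hl
      · exact h ⟨by omega, by rw [he]; omega⟩
      · have hpL : rcnt L g v < L := lt_trans hl h1
        have h2' : ¬ (rcnt L g v < rcnt L g v) := lt_irrefl _
        have : ¬ g (rcnt L g v) ≤ v := by
          intro hc
          exact h2' ((rcnt_lt_iff L g hmono v _).mpr ⟨hpL, hc⟩)
        have := hmono _ j hl h1
        omega
  · rintro ⟨h1, h2⟩
    exact ⟨h1, by omega⟩

include hmono in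
lemma rcnt_exists_iff (w : ℕ) (hw : 1 ≤ w) :
    (∃ j, j < L ∧ g j = w) ↔ (1 ≤ rcnt L g w ∧ rcnt L g w - 1 < L ∧ g (rcnt L g w - 1) = w) := by
  constructor
  · rintro ⟨j, hj, hgj⟩
    have h4 := rcnt_of_pos L g hmono j w hj hgj
    rw [h4]
    exact ⟨by omega, by simpa using hj, by simpa using hgj⟩
  · rintro ⟨h1, h2, h3⟩
    exact ⟨_, h2, h3⟩

end Row

section Tableau

variable {l1 l2 q : ℕ} (T : IncTab [l1, l2] q)

lemma row1_mono : ∀ j k, j < k → k < l1 → T.entry (0, j) < T.entry (0, k) := by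
  intro j k hjk hk
  have key : ∀ d j, j + d + 1 ≤ k → T.entry (0, j) < T.entry (0, j + d + 1) := by
    intro d
    induction d with
    | zero =>
      intro j hj
      exact T.row_strict 0 j (by rw [inShape_iff]; left; exact ⟨rfl, by omega⟩)
    | succ n ih =>
      intro j hj
      have h1 := ih j (by omega)
      have h2 : T.entry (0, j + n + 1) < T.entry (0, j + n + 2) :=
        T.row_strict 0 (j + n + 1) (by rw [inShape_iff]; left; exact ⟨rfl, by omega⟩)
      simp only [show j + (n+1) + 1 = j + n + 2 by omega]
      omega
  obtain ⟨d, hd⟩ : ∃ d, k = j + d + 1 := ⟨k - j - 1, by omega⟩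
  subst hd
  exact key d j (by omega)

lemma row2_mono :
    ∀ j k, j < k → k < l2 → T.entry (1, j) < T.entry (1, k) := by
  intro j k hjk hk
  have key : ∀ d j, j + d + 1 ≤ k → T.entry (1, j) < T.entry (1, j + d + 1) := by
    intro d
    induction d with
    | zero =>
      intro j hj
      exact T.row_strict 1 j (by rw [inShape_iff]; right; exact ⟨rfl, by omega⟩)
    | succ n ih =>
      intro j hj
      have h1 := ih j (by omega)
      have h2 : T.entry (1, j + n + 1) < T.entry (1, j + n + 2) :=
        T.row_strict 1 (j + n + 1) (by rw [inShape_iff]; right; exact ⟨rfl, by omega⟩)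
      simp only [show j + (n+1) + 1 = j + n + 2 by omega]
      omega
  obtain ⟨d, hd⟩ : ∃ d, k = j + d + 1 := ⟨k - j - 1, by omega⟩
  subst hd
  exact key d j (by omega)

lemma appearsRow_one_iff (v : ℕ) :
    appearsRow [l1, l2] T.entry 1 v ↔ ∃ j, j < l1 ∧ T.entry (0, j) = v := by
  unfold appearsRow
  constructor
  · rintro ⟨-, j, hj, he⟩
    rw [inShape_iff] at hj
    simp at hj
    exact ⟨j, by omega, he⟩
  · rintro ⟨j, hj, he⟩
    exact ⟨le_refl 1, j, by rw [inShape_iff]; left; exact ⟨rfl, hj⟩, he⟩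

lemma appearsRow_two_iff (v : ℕ) :
    appearsRow [l1, l2] T.entry 2 v ↔ ∃ j, j < l2 ∧ T.entry (1, j) = v := by
  unfold appearsRow
  constructor
  · rintro ⟨-, j, hj, he⟩
    rw [inShape_iff] at hj
    simp at hj
    exact ⟨j, by omega, he⟩
  · rintro ⟨j, hj, he⟩
    exact ⟨by omega, j, by rw [inShape_iff]; right; exact ⟨rfl, hj⟩, he⟩

lemma cnt_one_eq (v : ℕ) :
    cnt [l1, l2] T.entry 1 v = rcnt l1 (fun j => T.entry (0, j)) v := by
  unfold cnt rcnt
  symm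
  apply Finset.card_bij (fun j _ => T.entry (0, j))
  · intro j hj
    rw [Finset.mem_filter] at hj ⊢
    obtain ⟨hj1, hj2⟩ := hj
    rw [Finset.mem_range] at hj1
    have hpos : 1 ≤ T.entry (0, j) :=
      T.entry_pos _ (by rw [inShape_iff]; left; exact ⟨rfl, hj1⟩)
    exact ⟨Finset.mem_Icc.mpr ⟨hpos, hj2⟩, (appearsRow_one_iff T _).mpr ⟨j, hj1, rfl⟩⟩
  · intro a ha b hb hab
    rw [Finset.mem_filter, Finset.mem_range] at ha hb
    by_contra hne
    rcases Nat.lt_or_ge a b with h | h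
    · exact absurd hab (ne_of_lt (row1_mono T a b h hb.1))
    · have : b < a := by omega
      exact absurd hab.symm (ne_of_lt (row1_mono T b a this ha.1))
  · intro k hk
    rw [Finset.mem_filter, Finset.mem_Icc] at hk
    obtain ⟨⟨hk1, hk2⟩, hk3⟩ := hk
    obtain ⟨j, hj, he⟩ := (appearsRow_one_iff T _).mp hk3
    exact ⟨j, Finset.mem_filter.mpr ⟨Finset.mem_range.mpr hj,
      by show T.entry (0, j) ≤ v; rw [he]; exact hk2⟩, he⟩

lemma cnt_two_eq (v : ℕ) :
    cnt [l1, l2] T.entry 2 v = rcnt l2 (fun j => T.entry (1, j)) v := by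
  unfold cnt rcnt
  symm
  apply Finset.card_bij (fun j _ => T.entry (1, j))
  · intro j hj
    rw [Finset.mem_filter] at hj ⊢
    obtain ⟨hj1, hj2⟩ := hj
    rw [Finset.mem_range] at hj1
    have hpos : 1 ≤ T.entry (1, j) :=
      T.entry_pos _ (by rw [inShape_iff]; right; exact ⟨rfl, hj1⟩)
    exact ⟨Finset.mem_Icc.mpr ⟨hpos, hj2⟩, (appearsRow_two_iff T _).mpr ⟨j, hj1, rfl⟩⟩
  · intro a ha b hb hab
    rw [Finset.mem_filter, Finset.mem_range] at ha hb
    by_contra hne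
    rcases Nat.lt_or_ge a b with h | h
    · exact absurd hab (ne_of_lt (row2_mono T a b h hb.1))
    · have : b < a := by omega
      exact absurd hab.symm (ne_of_lt (row2_mono T b a this ha.1))
  · intro k hk
    rw [Finset.mem_filter, Finset.mem_Icc] at hk
    obtain ⟨⟨hk1, hk2⟩, hk3⟩ := hk
    obtain ⟨j, hj, he⟩ := (appearsRow_two_iff T _).mp hk3
    exact ⟨j, Finset.mem_filter.mpr ⟨Finset.mem_range.mpr hj,
      by show T.entry (1, j) ≤ v; rw [he]; exact hk2⟩, he⟩

end Tableau
section States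

variable {l1 l2 q : ℕ} (T : IncTab [l1, l2] q)

/-- Phase A slide state: bullet at `(0, p-1)`, row 1 shifted left before it. -/
noncomputable def stA (p : ℕ) : Cell → ℕ := fun c =>
  if c.1 = 0 ∧ c.2 + 1 < p then T.entry (0, c.2 + 1)
  else if c.1 = 0 ∧ c.2 + 1 = p then 0
  else T.entry c

/-- Phase B slide state: bullets at `(0, p-1)` and `(1, r-1)`. -/
noncomputable def stB (p r p0 : ℕ) : Cell → ℕ := fun c =>
  if c.1 = 0 ∧ c.2 + 1 < p then T.entry (0, c.2 + 1)
  else if c.1 = 0 ∧ c.2 + 1 = p then 0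
  else if c.1 = 1 ∧ p0 ≤ c.2 + 1 ∧ c.2 + 1 < r then T.entry (1, c.2 + 1)
  else if c.1 = 1 ∧ c.2 + 1 = r then 0
  else T.entry c

variable {p r p0 : ℕ}

lemma stA_lt {j : ℕ} (h : j + 1 < p) : stA T p (0, j) = T.entry (0, j + 1) := by
  simp only [stA]
  rw [if_pos ⟨trivial, h⟩]

lemma stA_bul {j : ℕ} (h : j + 1 = p) : stA T p (0, j) = 0 := by
  simp only [stA]
  rw [if_neg (by omega), if_pos ⟨trivial, h⟩]

lemma stA_gt {j : ℕ} (h : p < j + 1) : stA T p (0, j) = T.entry (0, j) := by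
  simp only [stA]
  rw [if_neg (by omega), if_neg (by omega)]

lemma stA_row {i j : ℕ} (h : i ≠ 0) : stA T p (i, j) = T.entry (i, j) := by
  simp only [stA]
  rw [if_neg (by simp; omega), if_neg (by simp; omega)]

lemma isBullet_stA (hp1 : 1 ≤ p) (hpl : p ≤ l1) (c : Cell) :
    isBullet [l1, l2] (stA T p) c ↔ c.1 = 0 ∧ c.2 + 1 = p := by
  obtain ⟨i, j⟩ := c
  unfold isBullet
  constructor
  · rintro ⟨hsh, h0⟩
    rw [inShape_iff] at hsh
    rcases hsh with ⟨hi, hj⟩ | ⟨hi, hj⟩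
    · subst hi
      rcases Nat.lt_trichotomy (j + 1) p with h | h | h
      · rw [stA_lt T h] at h0
        have := T.entry_pos (0, j+1) (by rw [inShape_iff]; left; exact ⟨rfl, by omega⟩)
        omega
      · exact ⟨rfl, h⟩
      · rw [stA_gt T h] at h0
        have := T.entry_pos (0, j) (by rw [inShape_iff]; left; exact ⟨rfl, hj⟩)
        omega
    · subst hi
      rw [stA_row T (by omega)] at h0
      have := T.entry_pos (1, j) (by rw [inShape_iff]; right; exact ⟨rfl, hj⟩)
      omega
  · rintro ⟨hi, hj⟩
    simp only at hi hj
    subst hi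
    exact ⟨by rw [inShape_iff]; left; exact ⟨rfl, by omega⟩, stA_bul T hj⟩

lemma inC_stA {w : ℕ} (hp1 : 1 ≤ p) (hpl : p ≤ l1)
    (nosplit : ¬ (p - 1 < l2 ∧ T.entry (1, p - 1) = w)) (c : Cell) :
    inC [l1, l2] (stA T p) w c ↔ (c.1 = 0 ∧ c.2 = p ∧ p < l1 ∧ T.entry (0, p) = w) := by
  obtain ⟨i, j⟩ := c
  unfold inC
  constructor
  · rintro ⟨hsh, hval, hadj⟩
    rcases hadj with ⟨hj1, hbul⟩ | ⟨hi1, hbul⟩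
    · rw [isBullet_stA T hp1 hpl] at hbul
      obtain ⟨hb1, hb2⟩ := hbul
      simp only at hb1 hb2 ⊢
      subst hb1
      have hjp : j = p := by omega
      rw [inShape_iff] at hsh
      simp only at hsh
      have hpl1 : p < l1 := by omega
      rw [hjp] at hval
      rw [stA_gt T (by omega)] at hval
      exact ⟨rfl, hjp, hpl1, hval⟩
    · rw [isBullet_stA T hp1 hpl] at hbul
      obtain ⟨hb1, hb2⟩ := hbul
      simp only at hb1 hb2
      have hi : i = 1 := by omega
      subst hi
      exfalso
      rw [inShape_iff] at hsh
      simp only at hsh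
      have hjl2 : j < l2 := by omega
      rw [stA_row T (by omega)] at hval
      exact nosplit ⟨by omega, by rw [show p - 1 = j by omega]; exact hval⟩
  · rintro ⟨hi, hj, hpl1, hval⟩
    simp only at hi hj
    subst hi; subst hj
    refine ⟨by rw [inShape_iff]; left; exact ⟨rfl, hpl1⟩, by rw [stA_gt T (by omega)]; exact hval, ?_⟩
    left
    exact ⟨hp1, by rw [isBullet_stA T hp1 hpl]; simp; omega⟩

lemma stepA_not {w : ℕ} (hp1 : 1 ≤ p) (hpl : p ≤ l1)
    (nosplit : ¬ (p - 1 < l2 ∧ T.entry (1, p - 1) = w))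
    (hnot : ¬ (p < l1 ∧ T.entry (0, p) = w)) :
    substep [l1, l2] w (stA T p) = stA T p := by
  have hinC : ∀ c, ¬ inC [l1, l2] (stA T p) w c := by
    intro c
    rw [inC_stA T hp1 hpl nosplit]
    tauto
  funext c
  simp only [substep]
  rw [if_neg (hinC c), if_neg (by rintro ⟨-, h | h⟩ <;> exact hinC _ h)]

lemma stepA_mem {w : ℕ} (hp1 : 1 ≤ p) (hpl : p ≤ l1)
    (nosplit : ¬ (p - 1 < l2 ∧ T.entry (1, p - 1) = w))
    (hmem : p < l1 ∧ T.entry (0, p) = w) :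
    substep [l1, l2] w (stA T p) = stA T (p + 1) := by
  have hinC : ∀ c : Cell, inC [l1, l2] (stA T p) w c ↔ c.1 = 0 ∧ c.2 = p := by
    intro c
    rw [inC_stA T hp1 hpl nosplit]
    constructor
    · tauto
    · rintro ⟨h1, h2⟩; exact ⟨h1, h2, hmem⟩
  funext c
  obtain ⟨i, j⟩ := c
  simp only [substep]
  by_cases hc : i = 0 ∧ j = p
  · obtain ⟨hi, hj⟩ := hc
    subst hi; subst hj
    rw [if_pos ((hinC _).mpr ⟨rfl, rfl⟩)]
    exact (stA_bul T rfl).symm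
  · by_cases hb : i = 0 ∧ j + 1 = p
    · obtain ⟨hi, hj⟩ := hb
      subst hi
      rw [if_neg (by rw [hinC]; simp; omega)]
      rw [if_pos ⟨(isBullet_stA T hp1 hpl _).mpr ⟨rfl, hj⟩,
        Or.inl ((hinC _).mpr ⟨rfl, by simpa using hj⟩)⟩]
      rw [stA_lt T (by omega), show j + 1 = p from hj]
      exact hmem.2.symm
    · rw [if_neg (by rw [hinC]; simp; omega)]
      rw [if_neg (by
        rintro ⟨hbul, -⟩
        rw [isBullet_stA T hp1 hpl] at hbul
        simp only at hbul
        omega)]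
      by_cases hi : i = 0
      · subst hi
        rcases Nat.lt_trichotomy (j + 1) p with h | h | h
        · rw [stA_lt T h, stA_lt T (by omega)]
        · omega
        · have h2 : p + 1 < j + 1 := by omega
          rw [stA_gt T h, stA_gt T h2]
      · rw [stA_row T hi, stA_row T hi]

end States
section StatesB

variable {l1 l2 q : ℕ} (T : IncTab [l1, l2] q) {p r p0 w : ℕ}

lemma stB_0lt {j : ℕ} (h : j + 1 < p) : stB T p r p0 (0, j) = T.entry (0, j + 1) := by
  simp only [stB]
  rw [if_pos ⟨trivial, h⟩]

lemma stB_0bul {j : ℕ} (h : j + 1 = p) : stB T p r p0 (0, j) = 0 := by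
  simp only [stB]
  rw [if_neg (by omega), if_pos ⟨trivial, h⟩]

lemma stB_0gt {j : ℕ} (h : p < j + 1) : stB T p r p0 (0, j) = T.entry (0, j) := by
  simp only [stB]
  rw [if_neg (by omega), if_neg (by omega), if_neg (by omega), if_neg (by omega)]

lemma stB_1lt {j : ℕ} (h : j + 1 < p0) (hp0r : p0 ≤ r) : stB T p r p0 (1, j) = T.entry (1, j) := by
  simp only [stB]
  rw [if_neg (by omega), if_neg (by omega), if_neg (by omega), if_neg (by omega)]

lemma stB_1mid {j : ℕ} (h1 : p0 ≤ j + 1) (h2 : j + 1 < r) :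
    stB T p r p0 (1, j) = T.entry (1, j + 1) := by
  simp only [stB]
  rw [if_neg (by omega), if_neg (by omega), if_pos ⟨trivial, h1, h2⟩]

lemma stB_1bul {j : ℕ} (h : j + 1 = r) : stB T p r p0 (1, j) = 0 := by
  simp only [stB]
  rw [if_neg (by omega), if_neg (by omega), if_neg (by omega), if_pos ⟨trivial, h⟩]

lemma stB_1gt {j : ℕ} (h : r < j + 1) : stB T p r p0 (1, j) = T.entry (1, j) := by
  simp only [stB]
  rw [if_neg (by omega), if_neg (by omega), if_neg (by omega), if_neg (by omega)]

lemma stB_row {i j : ℕ} (h : 2 ≤ i) : stB T p r p0 (i, j) = T.entry (i, j) := by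
  simp only [stB]
  rw [if_neg (by simp; omega), if_neg (by simp; omega), if_neg (by simp; omega),
    if_neg (by simp; omega)]

variable (hp1 : 1 ≤ p) (hpl : p ≤ l1) (hp01 : 1 ≤ p0) (hp0r : p0 ≤ r) (hrl : r ≤ l2)

include hp1 hpl hp01 hp0r hrl in
lemma isBullet_stB (c : Cell) :
    isBullet [l1, l2] (stB T p r p0) c ↔
      (c.1 = 0 ∧ c.2 + 1 = p) ∨ (c.1 = 1 ∧ c.2 + 1 = r) := by
  obtain ⟨i, j⟩ := c
  unfold isBullet
  constructor
  · rintro ⟨hsh, h0⟩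
    rw [inShape_iff] at hsh
    rcases hsh with ⟨hi, hj⟩ | ⟨hi, hj⟩
    · subst hi
      rcases Nat.lt_trichotomy (j + 1) p with h | h | h
      · rw [stB_0lt T h] at h0
        have := T.entry_pos (0, j+1) (by rw [inShape_iff]; left; exact ⟨rfl, by omega⟩)
        omega
      · exact Or.inl ⟨rfl, h⟩
      · rw [stB_0gt T h] at h0
        have := T.entry_pos (0, j) (by rw [inShape_iff]; left; exact ⟨rfl, hj⟩)
        omega
    · subst hi
      by_cases hc1 : j + 1 < p0
      · rw [stB_1lt T hc1 hp0r] at h0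
        have := T.entry_pos (1, j) (by rw [inShape_iff]; right; exact ⟨rfl, hj⟩)
        omega
      · rcases Nat.lt_trichotomy (j + 1) r with h | h | h
        · rw [stB_1mid T (by omega) h] at h0
          have := T.entry_pos (1, j+1) (by rw [inShape_iff]; right; exact ⟨rfl, by omega⟩)
          omega
        · exact Or.inr ⟨rfl, h⟩
        · rw [stB_1gt T h] at h0
          have := T.entry_pos (1, j) (by rw [inShape_iff]; right; exact ⟨rfl, hj⟩)
          omega
  · rintro (⟨hi, hj⟩ | ⟨hi, hj⟩)
    · simp only at hi hj
      subst hi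
      exact ⟨by rw [inShape_iff]; left; exact ⟨rfl, by omega⟩, stB_0bul T hj⟩
    · simp only at hi hj
      subst hi
      exact ⟨by rw [inShape_iff]; right; exact ⟨rfl, by omega⟩, stB_1bul T hj⟩

variable (hrp : r < p)
  (hno3 : ¬ (r + 1 < p ∧ p - 1 < l2 ∧ T.entry (1, p - 1) = w))

include hp1 hpl hp01 hp0r hrl hrp hno3 in
lemma inC_stB (c : Cell) :
    inC [l1, l2] (stB T p r p0) w c ↔
      (c.1 = 0 ∧ c.2 = p ∧ p < l1 ∧ T.entry (0, p) = w) ∨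
      (c.1 = 1 ∧ c.2 = r ∧ r < l2 ∧ T.entry (1, r) = w) := by
  obtain ⟨i, j⟩ := c
  unfold inC
  constructor
  · rintro ⟨hsh, hval, hadj⟩
    rw [inShape_iff] at hsh
    simp only at hsh hval ⊢
    rcases hadj with ⟨hj1, hbul⟩ | ⟨hi1, hbul⟩
    · rw [isBullet_stB T hp1 hpl hp01 hp0r hrl] at hbul
      simp only at hbul
      rcases hbul with ⟨hb1, hb2⟩ | ⟨hb1, hb2⟩
      · -- left neighbor is (0, p-1), so c = (0, p)
        subst hb1
        have hjp : j = p := by omega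
        rw [hjp] at hval ⊢
        rw [stB_0gt T (by omega)] at hval
        exact Or.inl ⟨rfl, rfl, by omega, hval⟩
      · -- left neighbor is (1, r-1), so c = (1, r)
        subst hb1
        have hjr : j = r := by omega
        rw [hjr] at hval ⊢
        rw [stB_1gt T (by omega)] at hval
        exact Or.inr ⟨rfl, rfl, by omega, hval⟩
    · rw [isBullet_stB T hp1 hpl hp01 hp0r hrl] at hbul
      simp only at hbul
      rcases hbul with ⟨hb1, hb2⟩ | ⟨hb1, hb2⟩
      · -- above neighbor is (0, p-1), so c = (1, p-1)
        have hi : i = 1 := by omega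
        subst hi
        have hjp : j = p - 1 := by omega
        by_cases hrp1 : r = p - 1
        · rw [hjp, ← hrp1] at hval ⊢
          rw [stB_1gt T (by omega)] at hval
          exact Or.inr ⟨rfl, rfl, by omega, hval⟩
        · exfalso
          rw [hjp] at hval
          rw [stB_1gt T (by omega)] at hval
          exact hno3 ⟨by omega, by omega, hval⟩
      · -- above neighbor is (1, r-1): c = (2, r-1), not in shape
        omega
  · rintro (⟨hi, hj, hpl1, hval⟩ | ⟨hi, hj, hrl1, hval⟩)
    · simp only at hi hj
      subst hi; subst hj
      refine ⟨by rw [inShape_iff]; left; exact ⟨rfl, hpl1⟩,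
        by rw [stB_0gt T (by omega)]; exact hval, ?_⟩
      left
      refine ⟨hp1, ?_⟩
      rw [isBullet_stB T hp1 hpl hp01 hp0r hrl]
      left
      simp
      omega
    · simp only at hi hj
      subst hi; subst hj
      refine ⟨by rw [inShape_iff]; right; exact ⟨rfl, hrl1⟩,
        by rw [stB_1gt T (by omega)]; exact hval, ?_⟩
      left
      refine ⟨by omega, ?_⟩
      rw [isBullet_stB T hp1 hpl hp01 hp0r hrl]
      right
      simp
      omega

end StatesB
section Steps

variable {l1 l2 q : ℕ} (T : IncTab [l1, l2] q) {p r p0 w : ℕ}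
variable (hp1 : 1 ≤ p) (hpl : p ≤ l1) (hp01 : 1 ≤ p0) (hp0r : p0 ≤ r) (hrl : r ≤ l2)
  (hrp : r < p) (hno3 : ¬ (r + 1 < p ∧ p - 1 < l2 ∧ T.entry (1, p - 1) = w))

include hp1 hpl hp01 hp0r hrl hrp hno3 in
lemma stepB_nn (h1 : ¬ (p < l1 ∧ T.entry (0, p) = w)) (h2 : ¬ (r < l2 ∧ T.entry (1, r) = w)) :
    substep [l1, l2] w (stB T p r p0) = stB T p r p0 := by
  have hinC : ∀ c, ¬ inC [l1, l2] (stB T p r p0) w c := by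
    intro c
    rw [inC_stB T hp1 hpl hp01 hp0r hrl hrp hno3]
    tauto
  funext c
  simp only [substep]
  rw [if_neg (hinC c), if_neg (by rintro ⟨-, h | h⟩ <;> exact hinC _ h)]

include hp1 hpl hp01 hp0r hrl hrp hno3 in
lemma stepB_mn (hm1 : p < l1 ∧ T.entry (0, p) = w) (h2 : ¬ (r < l2 ∧ T.entry (1, r) = w)) :
    substep [l1, l2] w (stB T p r p0) = stB T (p + 1) r p0 := by
  have hinC : ∀ c : Cell, inC [l1, l2] (stB T p r p0) w c ↔ c.1 = 0 ∧ c.2 = p := by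
    intro c
    rw [inC_stB T hp1 hpl hp01 hp0r hrl hrp hno3]
    constructor
    · rintro (⟨a, b, -, -⟩ | ⟨-, -, hc, hd⟩)
      · exact ⟨a, b⟩
      · exact absurd ⟨hc, hd⟩ h2
    · rintro ⟨a, b⟩; exact Or.inl ⟨a, b, hm1⟩
  funext c
  obtain ⟨i, j⟩ := c
  simp only [substep]
  by_cases hc : i = 0 ∧ j = p
  · obtain ⟨hi, hj⟩ := hc
    subst hi; subst hj
    rw [if_pos ((hinC _).mpr ⟨rfl, rfl⟩)]
    exact (stB_0bul T rfl).symm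
  · by_cases hb : i = 0 ∧ j + 1 = p
    · obtain ⟨hi, hj⟩ := hb
      subst hi
      rw [if_neg (by rw [hinC]; simp; omega)]
      rw [if_pos ⟨(isBullet_stB T hp1 hpl hp01 hp0r hrl _).mpr (Or.inl ⟨rfl, hj⟩),
        Or.inl ((hinC _).mpr ⟨rfl, by simpa using hj⟩)⟩]
      rw [stB_0lt T (by omega), show j + 1 = p from hj]
      exact hm1.2.symm
    · rw [if_neg (by rw [hinC]; simp; omega)]
      rw [if_neg (by
        rintro ⟨hbul, hadj | hadj⟩ <;>
        · rw [isBullet_stB T hp1 hpl hp01 hp0r hrl] at hbul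
          rw [hinC] at hadj
          simp only at hbul hadj
          omega)]
      rcases Nat.lt_trichotomy i 1 with hi | hi | hi
      · have hi0 : i = 0 := by omega
        subst hi0
        rcases Nat.lt_trichotomy (j + 1) p with h | h | h
        · rw [stB_0lt T h, stB_0lt T (by omega)]
        · omega
        · rw [stB_0gt T h, stB_0gt T (by omega)]
      · subst hi
        rcases Nat.lt_trichotomy (j + 1) r with h | h | h
        · by_cases h' : j + 1 < p0
          · rw [stB_1lt T h' hp0r, stB_1lt T h' hp0r]
          · rw [stB_1mid T (by omega) h, stB_1mid T (by omega) h]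
        · rw [stB_1bul T h, stB_1bul T h]
        · rw [stB_1gt T h, stB_1gt T h]
      · rw [stB_row T hi, stB_row T hi]

include hp1 hpl hp01 hp0r hrl hrp hno3 in
lemma stepB_nm (h1 : ¬ (p < l1 ∧ T.entry (0, p) = w)) (hm2 : r < l2 ∧ T.entry (1, r) = w)
    (hne : r + 1 ≠ p) :
    substep [l1, l2] w (stB T p r p0) = stB T p (r + 1) p0 := by
  have hinC : ∀ c : Cell, inC [l1, l2] (stB T p r p0) w c ↔ c.1 = 1 ∧ c.2 = r := by
    intro c
    rw [inC_stB T hp1 hpl hp01 hp0r hrl hrp hno3]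
    constructor
    · rintro (⟨-, -, hc, hd⟩ | ⟨a, b, -, -⟩)
      · exact absurd ⟨hc, hd⟩ h1
      · exact ⟨a, b⟩
    · rintro ⟨a, b⟩; exact Or.inr ⟨a, b, hm2⟩
  funext c
  obtain ⟨i, j⟩ := c
  simp only [substep]
  by_cases hc : i = 1 ∧ j = r
  · obtain ⟨hi, hj⟩ := hc
    subst hi; subst hj
    rw [if_pos ((hinC _).mpr ⟨rfl, rfl⟩)]
    exact (stB_1bul T rfl).symm
  · by_cases hb : i = 1 ∧ j + 1 = r
    · obtain ⟨hi, hj⟩ := hb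
      subst hi
      rw [if_neg (by rw [hinC]; simp; omega)]
      rw [if_pos ⟨(isBullet_stB T hp1 hpl hp01 hp0r hrl _).mpr (Or.inr ⟨rfl, hj⟩),
        Or.inl ((hinC _).mpr ⟨rfl, by simpa using hj⟩)⟩]
      rw [stB_1mid T (by omega) (by omega), show j + 1 = r from hj]
      exact hm2.2.symm
    · rw [if_neg (by rw [hinC]; simp; omega)]
      rw [if_neg (by
        rintro ⟨hbul, hadj | hadj⟩ <;>
        · rw [isBullet_stB T hp1 hpl hp01 hp0r hrl] at hbul
          rw [hinC] at hadj
          simp only at hbul hadj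
          omega)]
      rcases Nat.lt_trichotomy i 1 with hi | hi | hi
      · have hi0 : i = 0 := by omega
        subst hi0
        rcases Nat.lt_trichotomy (j + 1) p with h | h | h
        · rw [stB_0lt T h, stB_0lt T h]
        · rw [stB_0bul T h, stB_0bul T h]
        · rw [stB_0gt T h, stB_0gt T h]
      · subst hi
        rcases Nat.lt_trichotomy (j + 1) r with h | h | h
        · by_cases h' : j + 1 < p0
          · rw [stB_1lt T h' hp0r, stB_1lt T h' (by omega)]
          · rw [stB_1mid T (by omega) h, stB_1mid T (by omega) (by omega)]
        · omega
        · rw [stB_1gt T h, stB_1gt T (by omega)]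
      · rw [stB_row T hi, stB_row T hi]

include hp1 hpl hp01 hp0r hrl hrp hno3 in
lemma stepB_mm (hm1 : p < l1 ∧ T.entry (0, p) = w) (hm2 : r < l2 ∧ T.entry (1, r) = w) :
    substep [l1, l2] w (stB T p r p0) = stB T (p + 1) (r + 1) p0 := by
  have hinC : ∀ c : Cell, inC [l1, l2] (stB T p r p0) w c ↔
      (c.1 = 0 ∧ c.2 = p) ∨ (c.1 = 1 ∧ c.2 = r) := by
    intro c
    rw [inC_stB T hp1 hpl hp01 hp0r hrl hrp hno3]
    constructor
    · rintro (⟨a, b, -, -⟩ | ⟨a, b, -, -⟩)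
      · exact Or.inl ⟨a, b⟩
      · exact Or.inr ⟨a, b⟩
    · rintro (⟨a, b⟩ | ⟨a, b⟩)
      · exact Or.inl ⟨a, b, hm1⟩
      · exact Or.inr ⟨a, b, hm2⟩
  funext c
  obtain ⟨i, j⟩ := c
  simp only [substep]
  by_cases hc : i = 0 ∧ j = p
  · obtain ⟨hi, hj⟩ := hc
    subst hi; subst hj
    rw [if_pos ((hinC _).mpr (Or.inl ⟨rfl, rfl⟩))]
    exact (stB_0bul T rfl).symm
  · by_cases hc2 : i = 1 ∧ j = r
    · obtain ⟨hi, hj⟩ := hc2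
      subst hi; subst hj
      rw [if_pos ((hinC _).mpr (Or.inr ⟨rfl, rfl⟩))]
      exact (stB_1bul T rfl).symm
    · by_cases hb : i = 0 ∧ j + 1 = p
      · obtain ⟨hi, hj⟩ := hb
        subst hi
        rw [if_neg (by rw [hinC]; simp; omega)]
        rw [if_pos ⟨(isBullet_stB T hp1 hpl hp01 hp0r hrl _).mpr (Or.inl ⟨rfl, hj⟩),
          Or.inl ((hinC _).mpr (Or.inl ⟨rfl, by simpa using hj⟩))⟩]
        rw [stB_0lt T (by omega), show j + 1 = p from hj]
        exact hm1.2.symm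
      · by_cases hb2 : i = 1 ∧ j + 1 = r
        · obtain ⟨hi, hj⟩ := hb2
          subst hi
          rw [if_neg (by rw [hinC]; simp; omega)]
          rw [if_pos ⟨(isBullet_stB T hp1 hpl hp01 hp0r hrl _).mpr (Or.inr ⟨rfl, hj⟩),
            Or.inl ((hinC _).mpr (Or.inr ⟨rfl, by simpa using hj⟩))⟩]
          rw [stB_1mid T (by omega) (by omega), show j + 1 = r from hj]
          exact hm2.2.symm
        · rw [if_neg (by rw [hinC]; simp; omega)]
          rw [if_neg (by
            rintro ⟨hbul, hadj | hadj⟩ <;>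
            · rw [isBullet_stB T hp1 hpl hp01 hp0r hrl] at hbul
              rw [hinC] at hadj
              simp only at hbul hadj
              omega)]
          rcases Nat.lt_trichotomy i 1 with hi | hi | hi
          · have hi0 : i = 0 := by omega
            subst hi0
            rcases Nat.lt_trichotomy (j + 1) p with h | h | h
            · rw [stB_0lt T h, stB_0lt T (by omega)]
            · omega
            · rw [stB_0gt T h, stB_0gt T (by omega)]
          · subst hi
            rcases Nat.lt_trichotomy (j + 1) r with h | h | h
            · by_cases h' : j + 1 < p0
              · rw [stB_1lt T h' hp0r, stB_1lt T h' (by omega)]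
              · rw [stB_1mid T (by omega) h, stB_1mid T (by omega) (by omega)]
            · omega
            · rw [stB_1gt T h, stB_1gt T (by omega)]
          · rw [stB_row T hi, stB_row T hi]

omit hp01 hp0r hrl hrp hno3 in
include hp1 hpl in
lemma stepSplit (hm1 : p < l1 ∧ T.entry (0, p) = w) (hsp : p - 1 < l2 ∧ T.entry (1, p - 1) = w) :
    substep [l1, l2] w (stA T p) = stB T (p + 1) p p := by
  have hinC : ∀ c : Cell, inC [l1, l2] (stA T p) w c ↔
      (c.1 = 0 ∧ c.2 = p) ∨ (c.1 = 1 ∧ c.2 + 1 = p) := by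
    intro c
    obtain ⟨i, j⟩ := c
    unfold inC
    constructor
    · rintro ⟨hsh, hval, hadj⟩
      rw [inShape_iff] at hsh
      simp only at hsh hval ⊢
      rcases hadj with ⟨hj1, hbul⟩ | ⟨hi1, hbul⟩ <;>
        rw [isBullet_stA T hp1 hpl] at hbul <;> simp only at hbul <;> omega
    · rintro (⟨hi, hj⟩ | ⟨hi, hj⟩)
      · simp only at hi hj
        subst hi; subst hj
        refine ⟨by rw [inShape_iff]; left; exact ⟨rfl, hm1.1⟩,
          by rw [stA_gt T (by omega)]; exact hm1.2, ?_⟩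
        left
        exact ⟨hp1, by rw [isBullet_stA T hp1 hpl]; simp; omega⟩
      · simp only at hi hj
        subst hi
        refine ⟨by rw [inShape_iff]; right; exact ⟨rfl, by omega⟩,
          by rw [stA_row T (by omega), show j = p - 1 by omega]; exact hsp.2, ?_⟩
        right
        exact ⟨by omega, by rw [isBullet_stA T hp1 hpl]; simp; omega⟩
  funext c
  obtain ⟨i, j⟩ := c
  simp only [substep]
  by_cases hc : i = 0 ∧ j = p
  · obtain ⟨hi, hj⟩ := hc
    subst hi; subst hj
    rw [if_pos ((hinC _).mpr (Or.inl ⟨rfl, rfl⟩))]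
    exact (stB_0bul T rfl).symm
  · by_cases hc2 : i = 1 ∧ j + 1 = p
    · obtain ⟨hi, hj⟩ := hc2
      subst hi
      rw [if_pos ((hinC _).mpr (Or.inr ⟨rfl, hj⟩))]
      exact (stB_1bul T hj).symm
    · by_cases hb : i = 0 ∧ j + 1 = p
      · obtain ⟨hi, hj⟩ := hb
        subst hi
        rw [if_neg (by rw [hinC]; simp; omega)]
        rw [if_pos ⟨(isBullet_stA T hp1 hpl _).mpr ⟨rfl, hj⟩,
          Or.inl ((hinC _).mpr (Or.inl ⟨rfl, by simpa using hj⟩))⟩]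
        rw [stB_0lt T (by omega), show j + 1 = p from hj]
        exact hm1.2.symm
      · rw [if_neg (by rw [hinC]; simp; omega)]
        rw [if_neg (by
          rintro ⟨hbul, -⟩
          rw [isBullet_stA T hp1 hpl] at hbul
          simp only at hbul
          omega)]
        rcases Nat.lt_trichotomy i 1 with hi | hi | hi
        · have hi0 : i = 0 := by omega
          subst hi0
          rcases Nat.lt_trichotomy (j + 1) p with h | h | h
          · rw [stA_lt T h, stB_0lt T (by omega)]
          · omega
          · rw [stA_gt T h, stB_0gt T (by omega)]
        · subst hi
          rw [stA_row T (by omega)]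
          by_cases h : j + 1 < p
          · rw [stB_1lt T h (le_refl p)]
          · rw [stB_1gt T (by omega)]
        · rw [stA_row T (by omega), stB_row T hi]

end Steps
section RowExtra

variable (L : ℕ) (g : ℕ → ℕ) (hmono : ∀ j k, j < k → k < L → g j < g k)

include hmono in
lemma rcnt_mono {v w : ℕ} (h : v ≤ w) : rcnt L g v ≤ rcnt L g w := by
  by_contra hc
  push_neg at hc
  obtain ⟨h1, h2⟩ := (rcnt_lt_iff L g hmono v (rcnt L g w)).mp hc
  exact absurd ((rcnt_lt_iff L g hmono w _).mpr ⟨h1, le_trans h2 h⟩) (lt_irrefl _)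

include hmono in
lemma rcnt_succ_le (v : ℕ) : rcnt L g (v + 1) ≤ rcnt L g v + 1 := by
  by_cases h : rcnt L g v < L ∧ g (rcnt L g v) = v + 1
  · rw [rcnt_succ_mem L g hmono v h.1 h.2]
  · rw [rcnt_succ_not_mem L g hmono v h]
    omega

end RowExtra

section TabExtra

variable {l1 l2 q : ℕ} (T : IncTab [l1, l2] q)

lemma entry_ge_row1 (j : ℕ) (hj : j < l1) : j + 1 ≤ T.entry (0, j) := by
  induction j with
  | zero => exact T.entry_pos (0, 0) (by rw [inShape_iff]; left; exact ⟨rfl, hj⟩)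
  | succ n ih =>
    have h1 := ih (by omega)
    have h2 := T.row_strict 0 n (by rw [inShape_iff]; left; exact ⟨rfl, hj⟩)
    omega

lemma entry_ge_row2 (hll : l2 ≤ l1) (j : ℕ) (hj : j < l2) : j + 2 ≤ T.entry (1, j) := by
  have h1 := entry_ge_row1 T j (by omega)
  have h2 : T.entry (0, j) < T.entry (1, j) :=
    T.col_strict 0 j (by rw [inShape_iff]; right; exact ⟨rfl, hj⟩)
  omega

lemma appearsRow_ge3 (f : Cell → ℕ) (v r : ℕ) (hr : 3 ≤ r) :
    ¬ appearsRow [l1, l2] f r v := by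
  rintro ⟨h1, j, hsh, -⟩
  rw [inShape_iff] at hsh
  omega

lemma appearsRow1_iff (f : Cell → ℕ) (v : ℕ) :
    appearsRow [l1, l2] f 1 v ↔ ∃ j, j < l1 ∧ f (0, j) = v := by
  unfold appearsRow
  constructor
  · rintro ⟨-, j, hj, he⟩
    rw [inShape_iff] at hj
    simp at hj
    exact ⟨j, by omega, he⟩
  · rintro ⟨j, hj, he⟩
    exact ⟨le_refl 1, j, by rw [inShape_iff]; left; exact ⟨rfl, hj⟩, he⟩

lemma appearsRow2_iff (f : Cell → ℕ) (v : ℕ) :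
    appearsRow [l1, l2] f 2 v ↔ ∃ j, j < l2 ∧ f (1, j) = v := by
  unfold appearsRow
  constructor
  · rintro ⟨-, j, hj, he⟩
    rw [inShape_iff] at hj
    simp at hj
    exact ⟨j, by omega, he⟩
  · rintro ⟨j, hj, he⟩
    exact ⟨by omega, j, by rw [inShape_iff]; right; exact ⟨rfl, hj⟩, he⟩

lemma rowSetW_ext (f g : Cell → ℕ) (v w : ℕ)
    (h1 : (∃ j, j < l1 ∧ f (0, j) = v) ↔ (∃ j, j < l1 ∧ g (0, j) = w))
    (h2 : (∃ j, j < l2 ∧ f (1, j) = v) ↔ (∃ j, j < l2 ∧ g (1, j) = w)) :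
    rowSetW [l1, l2] f v = rowSetW [l1, l2] g w := by
  unfold rowSetW
  ext r
  simp only [Set.mem_setOf_eq]
  match r with
  | 0 => constructor <;> (rintro ⟨h, -⟩; omega)
  | 1 => rw [appearsRow1_iff, appearsRow1_iff]; exact h1
  | 2 => rw [appearsRow2_iff, appearsRow2_iff]; exact h2
  | (n+3) =>
    constructor <;> (intro h; exact absurd h (appearsRow_ge3 _ _ _ (by omega)))

lemma rowSetW_pair (f : Cell → ℕ) (v : ℕ)
    (h1 : ∃ j, j < l1 ∧ f (0, j) = v) (h2 : ∃ j, j < l2 ∧ f (1, j) = v) :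
    rowSetW [l1, l2] f v = ({1, 2} : Set ℕ) := by
  unfold rowSetW
  ext r
  simp only [Set.mem_setOf_eq, Set.mem_insert_iff, Set.mem_singleton_iff]
  match r with
  | 0 => constructor
         · rintro ⟨h, -⟩; omega
         · rintro (h | h) <;> omega
  | 1 => simp only [appearsRow1_iff]; tauto
  | 2 => simp only [appearsRow2_iff]; tauto
  | (n+3) =>
    constructor
    · intro h; exact absurd h (appearsRow_ge3 _ _ _ (by omega))
    · rintro (h | h) <;> omega

lemma rowSetW_single (f : Cell → ℕ) (v : ℕ)
    (h1 : ∃ j, j < l1 ∧ f (0, j) = v) (h2 : ¬ ∃ j, j < l2 ∧ f (1, j) = v) :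
    rowSetW [l1, l2] f v = ({1} : Set ℕ) := by
  unfold rowSetW
  ext r
  simp only [Set.mem_setOf_eq, Set.mem_singleton_iff]
  match r with
  | 0 => constructor
         · rintro ⟨h, -⟩; omega
         · intro h; omega
  | 1 => simp only [appearsRow1_iff]; tauto
  | 2 => simp only [appearsRow2_iff]; constructor
         · intro h; exact absurd h h2
         · intro h; omega
  | (n+3) =>
    constructor
    · intro h; exact absurd h (appearsRow_ge3 _ _ _ (by omega))
    · intro h; omega

lemma rowSetW_empty (f : Cell → ℕ) (v : ℕ)
    (h1 : ¬ ∃ j, j < l1 ∧ f (0, j) = v) (h2 : ¬ ∃ j, j < l2 ∧ f (1, j) = v) :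
    rowSetW [l1, l2] f v = (∅ : Set ℕ) := by
  unfold rowSetW
  ext r
  simp only [Set.mem_setOf_eq, Set.mem_empty_iff_false, iff_false]
  match r with
  | 0 => rintro ⟨h, -⟩; omega
  | 1 => rw [appearsRow1_iff]; exact h1
  | 2 => rw [appearsRow2_iff]; exact h2
  | (n+3) => exact appearsRow_ge3 _ _ _ (by omega)

lemma isBalance_iff (j : ℕ) :
    isBalance [l1, l2] T.entry j ↔
      rcnt l1 (fun k => T.entry (0, k)) j = rcnt l2 (fun k => T.entry (1, k)) j := by
  unfold isBalance
  rw [cnt_one_eq, cnt_two_eq]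

lemma isTeeter_iff (j : ℕ) :
    isTeeter [l1, l2] T.entry j ↔
      appearsRow [l1, l2] T.entry 1 j ∧ appearsRow [l1, l2] T.entry 2 j ∧
      rcnt l1 (fun k => T.entry (0, k)) j = rcnt l2 (fun k => T.entry (1, k)) j + 1 := by
  unfold isTeeter
  rw [cnt_one_eq, cnt_two_eq]

end TabExtra
section Main

variable {l1 l2 q : ℕ} (T : IncTab [l1, l2] q)

lemma case3_main (hw : rowSetW [l1, l2] T.entry 1 = (∅ : Set ℕ)) :
    (∀ m, 1 ≤ m → m < q →
      rowSetW [l1, l2] (kpromote [l1, l2] q T.entry) m = rowSetW [l1, l2] T.entry (m + 1)) ∧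
    rowSetW [l1, l2] (kpromote [l1, l2] q T.entry) q = (∅ : Set ℕ) := by
  have hno1 : ∀ c, inShape [l1, l2] c → T.entry c ≠ 1 := by
    rintro ⟨i, j⟩ hc he
    have hc' := hc
    rw [inShape_iff] at hc'
    rcases hc' with ⟨hi, hj⟩ | ⟨hi, hj⟩
    · subst hi
      have : (1:ℕ) ∈ rowSetW [l1, l2] T.entry 1 :=
        (appearsRow1_iff T.entry 1).mpr ⟨j, hj, he⟩
      rw [hw] at this
      exact this
    · subst hi
      have : (2:ℕ) ∈ rowSetW [l1, l2] T.entry 1 :=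
        (appearsRow2_iff T.entry 1).mpr ⟨j, hj, he⟩
      rw [hw] at this
      exact this
  have hiter : ∀ j, iterSub [l1, l2] q 1 T.entry j = T.entry := by
    intro j
    induction j with
    | zero =>
      funext c
      simp only [iterSub]
      rw [if_neg]
      rintro ⟨hc, h1⟩
      subst hc
      by_cases hsh : inShape [l1, l2] ((0, 0) : Cell)
      · exact hno1 _ hsh h1
      · rw [T.zero_outside _ hsh] at h1
        exact absurd h1 (by omega)
    | succ n ih =>
      have hbul : ∀ c, ¬ isBullet [l1, l2] T.entry c := by
        rintro c ⟨hsh, h0⟩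
        have := T.entry_pos c hsh
        omega
      have hinC : ∀ w c, ¬ inC [l1, l2] T.entry w c := by
        rintro w c ⟨-, -, ⟨-, hb⟩ | ⟨-, hb⟩⟩ <;> exact hbul _ hb
      show substep [l1, l2] (cyc q 1 (n+1)) (iterSub [l1, l2] q 1 T.entry n) = T.entry
      rw [ih]
      funext c
      simp only [substep]
      rw [if_neg (hinC _ c), if_neg (by rintro ⟨hb, -⟩; exact hbul _ hb)]
  have hgro : gromote [l1, l2] q 1 T.entry = T.entry := by
    funext c
    simp only [gromote]
    rw [hiter]
    rw [if_neg]
    rintro ⟨hsh, h0⟩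
    have := T.entry_pos c hsh
    omega
  have hkp : ∀ c, inShape [l1, l2] c →
      kpromote [l1, l2] q T.entry c = T.entry c - 1 := by
    intro c hsh
    simp only [kpromote]
    rw [if_pos hsh, hgro, if_neg (hno1 c hsh)]
  constructor
  · intro m hm1 hmq
    apply rowSetW_ext
    · constructor
      · rintro ⟨j, hj, he⟩
        have hsh : inShape [l1, l2] ((0, j) : Cell) := by rw [inShape_iff]; left; exact ⟨rfl, hj⟩
        rw [hkp _ hsh] at he
        have h1 := T.entry_pos _ hsh
        have h2 := hno1 _ hsh
        exact ⟨j, hj, by omega⟩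
      · rintro ⟨j, hj, he⟩
        have hsh : inShape [l1, l2] ((0, j) : Cell) := by rw [inShape_iff]; left; exact ⟨rfl, hj⟩
        exact ⟨j, hj, by rw [hkp _ hsh, he]; omega⟩
    · constructor
      · rintro ⟨j, hj, he⟩
        have hsh : inShape [l1, l2] ((1, j) : Cell) := by rw [inShape_iff]; right; exact ⟨rfl, hj⟩
        rw [hkp _ hsh] at he
        have h1 := T.entry_pos _ hsh
        have h2 := hno1 _ hsh
        exact ⟨j, hj, by omega⟩
      · rintro ⟨j, hj, he⟩
        have hsh : inShape [l1, l2] ((1, j) : Cell) := by rw [inShape_iff]; right; exact ⟨rfl, hj⟩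
        exact ⟨j, hj, by rw [hkp _ hsh, he]; omega⟩
  · apply rowSetW_empty
    · rintro ⟨j, hj, he⟩
      have hsh : inShape [l1, l2] ((0, j) : Cell) := by rw [inShape_iff]; left; exact ⟨rfl, hj⟩
      rw [hkp _ hsh] at he
      have h1 := T.entry_pos _ hsh
      have h2 := hno1 _ hsh
      have h3 := T.entry_le _ hsh
      omega
    · rintro ⟨j, hj, he⟩
      have hsh : inShape [l1, l2] ((1, j) : Cell) := by rw [inShape_iff]; right; exact ⟨rfl, hj⟩
      rw [hkp _ hsh] at he
      have h1 := T.entry_pos _ hsh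
      have h2 := hno1 _ hsh
      have h3 := T.entry_le _ hsh
      omega

end Main
section RowPred

variable (L : ℕ) (g : ℕ → ℕ) (hmono : ∀ j k, j < k → k < L → g j < g k)

include hmono in
lemma rcnt_pred (v j0 : ℕ) (hv : 1 ≤ v) (hj0 : j0 < L) (hval : g j0 = v) :
    rcnt L g (v - 1) = j0 := by
  apply nat_eq_of_lt_iff
  intro j
  rw [rcnt_lt_iff L g hmono]
  constructor
  · rintro ⟨h1, h2⟩
    by_contra hc
    push_neg at hc
    rcases Nat.eq_or_lt_of_le hc with he | hl
    · subst he; omega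
    · have h3 := hmono j0 j hl h1
      omega
  · intro h
    have h2 : g j < g j0 := hmono j j0 h hj0
    exact ⟨by omega, by omega⟩

end RowPred

section Main2

variable {l1 l2 q : ℕ} (T : IncTab [l1, l2] q)

lemma first_is_one (hll : l2 ≤ l1) (hne : rowSetW [l1, l2] T.entry 1 ≠ (∅ : Set ℕ)) :
    1 ≤ l1 ∧ T.entry (0, 0) = 1 ∧ 1 ≤ q := by
  obtain ⟨r, hr⟩ := Set.nonempty_iff_ne_empty.mpr hne
  obtain ⟨hr1, j, hsh, he⟩ := hr
  rw [inShape_iff] at hsh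
  rcases hsh with ⟨hi, hj⟩ | ⟨hi, hj⟩ <;> simp only at hi hj
  · rw [hi] at he
    have := entry_ge_row1 T j hj
    have hj0 : j = 0 := by omega
    rw [hj0] at he
    have hl1 : 1 ≤ l1 := by omega
    have hq := T.entry_le (0, 0) (by rw [inShape_iff]; left; exact ⟨rfl, hl1⟩)
    rw [he] at hq
    exact ⟨hl1, he, hq⟩
  · rw [hi] at he
    have := entry_ge_row2 T hll j hj
    omega

lemma PQ_lt (hll : l2 ≤ l1) (hl1 : 1 ≤ l1) (h00 : T.entry (0, 0) = 1)
    (hnb : ∀ j, 1 ≤ j → j ≤ q → ¬ isBalance [l1, l2] T.entry j) :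
    ∀ v, 1 ≤ v → v ≤ q →
      rcnt l2 (fun k => T.entry (1, k)) v < rcnt l1 (fun k => T.entry (0, k)) v := by
  have hm1 := row1_mono T
  have hm2 := row2_mono T
  intro v
  induction v with
  | zero => omega
  | succ n ih =>
    intro _ hq
    by_cases hn : 1 ≤ n
    · have h1 := ih hn (by omega)
      have h2 := rcnt_succ_le l2 _ hm2 n
      have h3 := rcnt_mono l1 _ hm1 (show n ≤ n + 1 by omega)
      have h4 : ¬ isBalance [l1, l2] T.entry (n + 1) := hnb (n+1) (by omega) hq
      rw [isBalance_iff] at h4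
      omega
    · have hn0 : n = 0 := by omega
      subst hn0
      have hP1 : rcnt l1 (fun k => T.entry (0, k)) 1 = 1 :=
        rcnt_of_pos l1 _ hm1 0 1 hl1 h00
      have hQ1 : rcnt l2 (fun k => T.entry (1, k)) 1 = 0 := by
        by_contra hc
        have h1 : 1 ≤ rcnt l2 (fun k => T.entry (1, k)) 1 := by omega
        obtain ⟨ha, hb⟩ := rcnt_pos_last l2 _ hm2 1 h1
        have := entry_ge_row2 T hll _ ha
        omega
      show rcnt l2 (fun k => T.entry (1, k)) 1 < rcnt l1 (fun k => T.entry (0, k)) 1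
      omega

lemma cyc_one (j : ℕ) (h : j < q) (hj : 1 ≤ j) : cyc q 1 j = j + 1 := by
  unfold cyc
  rw [show (1 : ℕ) - 1 + j = j by omega, Nat.mod_eq_of_lt h]

lemma iterA_master (hll : l2 ≤ l1) (hl1 : 1 ≤ l1) (h00 : T.entry (0, 0) = 1)
    (hnb : ∀ j, 1 ≤ j → j ≤ q → ¬ isBalance [l1, l2] T.entry j)
    (N : ℕ) (hNq : N ≤ q)
    (hnt : ∀ j, 1 ≤ j → j ≤ N → ¬ isTeeter [l1, l2] T.entry j) :
    ∀ v, 1 ≤ v → v ≤ N →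
      iterSub [l1, l2] q 1 T.entry (v - 1) = stA T (rcnt l1 (fun k => T.entry (0, k)) v) := by
  have hm1 := row1_mono T
  have hm2 := row2_mono T
  intro v
  induction v with
  | zero => omega
  | succ n ih =>
    intro _ hN
    by_cases hn : 1 ≤ n
    · -- step : state after n is stA (P n); process value n+1
      have hih := ih hn (by omega)
      have hp1 : 1 ≤ rcnt l1 (fun k => T.entry (0, k)) n := by
        have h1 := rcnt_of_pos l1 _ hm1 0 1 hl1 h00
        have h2 := rcnt_mono l1 _ hm1 hn
        omega
      have hpl : rcnt l1 (fun k => T.entry (0, k)) n ≤ l1 := rcnt_le l1 _ hm1 n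
      have hnosplit : ¬ (rcnt l1 (fun k => T.entry (0, k)) n - 1 < l2 ∧
          T.entry (1, rcnt l1 (fun k => T.entry (0, k)) n - 1) = n + 1) := by
        rintro ⟨hs1, hs2⟩
        have hQ1 : rcnt l2 (fun k => T.entry (1, k)) (n + 1) =
            rcnt l1 (fun k => T.entry (0, k)) n := by
          have h3 := rcnt_of_pos l2 _ hm2 _ (n+1) hs1 hs2
          omega
        by_cases hmem : rcnt l1 (fun k => T.entry (0, k)) n < l1 ∧
            T.entry (0, rcnt l1 (fun k => T.entry (0, k)) n) = n + 1
        · have hP1 := rcnt_succ_mem l1 _ hm1 n hmem.1 hmem.2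
          apply hnt (n+1) (by omega) hN
          rw [isTeeter_iff]
          refine ⟨(appearsRow1_iff T.entry _).mpr ⟨_, hmem.1, hmem.2⟩,
            (appearsRow2_iff T.entry _).mpr ⟨_, hs1, hs2⟩, ?_⟩
          omega
        · have hP1 := rcnt_succ_not_mem l1 _ hm1 n hmem
          apply hnb (n+1) (by omega) (by omega)
          rw [isBalance_iff]
          omega
      have hstep : iterSub [l1, l2] q 1 T.entry (n + 1 - 1) =
          substep [l1, l2] (n + 1) (stA T (rcnt l1 (fun k => T.entry (0, k)) n)) := by
        rw [show n + 1 - 1 = (n - 1) + 1 by omega]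
        show substep [l1, l2] (cyc q 1 (n - 1 + 1)) (iterSub [l1, l2] q 1 T.entry (n - 1))
            = _
        rw [show n - 1 + 1 = n by omega, cyc_one n (by omega) hn, hih]
      rw [hstep]
      by_cases hmem : rcnt l1 (fun k => T.entry (0, k)) n < l1 ∧
          T.entry (0, rcnt l1 (fun k => T.entry (0, k)) n) = n + 1
      · rw [rcnt_succ_mem l1 _ hm1 n hmem.1 hmem.2]
        exact stepA_mem T hp1 hpl hnosplit hmem
      · rw [rcnt_succ_not_mem l1 _ hm1 n hmem]
        exact stepA_not T hp1 hpl hnosplit hmem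
    · -- base : v = 1
      have hn0 : n = 0 := by omega
      subst hn0
      have hP1 : rcnt l1 (fun k => T.entry (0, k)) 1 = 1 :=
        rcnt_of_pos l1 _ hm1 0 1 hl1 h00
      show iterSub [l1, l2] q 1 T.entry 0 = stA T (rcnt l1 (fun k => T.entry (0, k)) 1)
      rw [hP1]
      funext c
      obtain ⟨i, j⟩ := c
      show (if (i, j) = ((0, 0) : Cell) ∧ T.entry (i, j) = 1 then 0 else T.entry (i, j))
          = stA T 1 (i, j)
      by_cases hc : (i, j) = ((0, 0) : Cell)
      · obtain ⟨hi, hj⟩ := Prod.mk.injEq .. ▸ hc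
        subst hi; subst hj
        rw [if_pos ⟨rfl, h00⟩, stA_bul T rfl]
      · rw [if_neg (by tauto)]
        by_cases hi : i = 0
        · subst hi
          have hj : 1 ≤ j := by
            by_contra hj
            exact hc (by simp; omega)
          rw [stA_gt T (by omega)]
        · rw [stA_row T hi]

end Main2
section Case1

variable {l1 l2 q : ℕ} (T : IncTab [l1, l2] q)

lemma rcnt_full_row1 : rcnt l1 (fun k => T.entry (0, k)) q = l1 := by
  apply nat_eq_of_lt_iff
  intro j
  rw [rcnt_lt_iff l1 _ (row1_mono T)]
  constructor
  · tauto
  · intro h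
    exact ⟨h, T.entry_le (0, j) (by rw [inShape_iff]; left; exact ⟨rfl, h⟩)⟩

lemma rcnt_full_row2 : rcnt l2 (fun k => T.entry (1, k)) q = l2 := by
  apply nat_eq_of_lt_iff
  intro j
  rw [rcnt_lt_iff l2 _ (row2_mono T)]
  constructor
  · tauto
  · intro h
    exact ⟨h, T.entry_le (1, j) (by rw [inShape_iff]; right; exact ⟨rfl, h⟩)⟩

/-- Common computation of `kpromote` values from the final slide state, when the final
state is `stB T l1 l2 p0` (phase B) -- phase A final state `stA T l1` is handled by
taking `p0 = l2` (then row 2 of `stB` behaves as in `stA` except the last bullet). -/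
lemma kp_row1_lt (hfin : iterSub [l1, l2] q 1 T.entry (q - 1) = stA T l1)
    (j : ℕ) (hj : j + 1 < l1) :
    kpromote [l1, l2] q T.entry (0, j) = T.entry (0, j + 1) - 1 := by
  have hsh : inShape [l1, l2] ((0, j) : Cell) := by rw [inShape_iff]; left; exact ⟨rfl, by omega⟩
  have hge := entry_ge_row1 T (j+1) hj
  have hg : gromote [l1, l2] q 1 T.entry (0, j) = T.entry (0, j + 1) := by
    simp only [gromote]
    rw [hfin, stA_lt T hj, if_neg (by rintro ⟨-, h⟩; omega)]
  simp only [kpromote]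
  rw [if_pos hsh, hg, if_neg (by omega)]

lemma kp_row1_last (hfin : iterSub [l1, l2] q 1 T.entry (q - 1) = stA T l1) (hl1 : 1 ≤ l1) :
    kpromote [l1, l2] q T.entry (0, l1 - 1) = q := by
  have hsh : inShape [l1, l2] ((0, l1 - 1) : Cell) := by
    rw [inShape_iff]; left; exact ⟨rfl, by omega⟩
  have hc : inShape [l1, l2] ((0, l1 - 1) : Cell) ∧ stA T l1 (0, l1 - 1) = 0 :=
    ⟨hsh, stA_bul T (by omega)⟩
  have hg : gromote [l1, l2] q 1 T.entry (0, l1 - 1) = 1 := by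
    simp only [gromote]
    rw [hfin, if_pos hc]
  simp only [kpromote]
  rw [if_pos hsh, hg, if_pos rfl]

lemma kp_row2_A (hll : l2 ≤ l1) (hfin : iterSub [l1, l2] q 1 T.entry (q - 1) = stA T l1)
    (j : ℕ) (hj : j < l2) :
    kpromote [l1, l2] q T.entry (1, j) = T.entry (1, j) - 1 := by
  have hsh : inShape [l1, l2] ((1, j) : Cell) := by rw [inShape_iff]; right; exact ⟨rfl, hj⟩
  have hge := entry_ge_row2 T hll j hj
  have hg : gromote [l1, l2] q 1 T.entry (1, j) = T.entry (1, j) := by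
    simp only [gromote]
    rw [hfin, stA_row T (by omega), if_neg (by rintro ⟨-, h⟩; omega)]
  simp only [kpromote]
  rw [if_pos hsh, hg, if_neg (by omega)]

lemma case1_main (hll : l2 ≤ l1)
    (hw1 : rowSetW [l1, l2] T.entry 1 ≠ (∅ : Set ℕ))
    (hnb : ∀ j, 1 ≤ j → j ≤ q → ¬ isBalance [l1, l2] T.entry j)
    (hnt : ∀ j, 1 ≤ j → j ≤ q → ¬ isTeeter [l1, l2] T.entry j) :
    (∀ m, 1 ≤ m → m < q →
      rowSetW [l1, l2] (kpromote [l1, l2] q T.entry) m = rowSetW [l1, l2] T.entry (m + 1)) ∧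
    rowSetW [l1, l2] (kpromote [l1, l2] q T.entry) q = ({1} : Set ℕ) := by
  obtain ⟨hl1, h00, hq1⟩ := first_is_one T hll hw1
  have hfin : iterSub [l1, l2] q 1 T.entry (q - 1) = stA T l1 := by
    have h := iterA_master T hll hl1 h00 hnb q (le_refl q) hnt q hq1 (le_refl q)
    rw [rcnt_full_row1 T] at h
    exact h
  constructor
  · intro m hm1 hmq
    apply rowSetW_ext
    · constructor
      · rintro ⟨j, hj, he⟩
        by_cases hjl : j + 1 < l1
        · rw [kp_row1_lt T hfin j hjl] at he
          have hge := entry_ge_row1 T (j+1) hjl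
          exact ⟨j + 1, hjl, by omega⟩
        · rw [show j = l1 - 1 by omega] at he
          rw [kp_row1_last T hfin hl1] at he
          omega
      · rintro ⟨j, hj, he⟩
        have hj1 : 1 ≤ j := by
          by_contra hc
          rw [show j = 0 by omega, h00] at he
          omega
        refine ⟨j - 1, by omega, ?_⟩
        rw [kp_row1_lt T hfin (j - 1) (by omega), show j - 1 + 1 = j by omega, he]
        omega
    · constructor
      · rintro ⟨j, hj, he⟩
        rw [kp_row2_A T hll hfin j hj] at he
        have hge := entry_ge_row2 T hll j hj
        exact ⟨j, hj, by omega⟩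
      · rintro ⟨j, hj, he⟩
        refine ⟨j, hj, ?_⟩
        rw [kp_row2_A T hll hfin j hj, he]
        omega
  · apply rowSetW_single
    · exact ⟨l1 - 1, by omega, kp_row1_last T hfin hl1⟩
    · rintro ⟨j, hj, he⟩
      rw [kp_row2_A T hll hfin j hj] at he
      have hge := entry_ge_row2 T hll j hj
      have hle := T.entry_le (1, j) (by rw [inShape_iff]; right; exact ⟨rfl, hj⟩)
      omega

end Case1
section Case2

variable {l1 l2 q : ℕ} (T : IncTab [l1, l2] q) {p0 : ℕ}

lemma kp_row1_lt_B (hfin : iterSub [l1, l2] q 1 T.entry (q - 1) = stB T l1 l2 p0)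
    (j : ℕ) (hj : j + 1 < l1) :
    kpromote [l1, l2] q T.entry (0, j) = T.entry (0, j + 1) - 1 := by
  have hsh : inShape [l1, l2] ((0, j) : Cell) := by rw [inShape_iff]; left; exact ⟨rfl, by omega⟩
  have hge := entry_ge_row1 T (j+1) hj
  have hg : gromote [l1, l2] q 1 T.entry (0, j) = T.entry (0, j + 1) := by
    simp only [gromote]
    rw [hfin, stB_0lt T hj, if_neg (by rintro ⟨-, h⟩; omega)]
  simp only [kpromote]
  rw [if_pos hsh, hg, if_neg (by omega)]

lemma kp_row1_last_B (hfin : iterSub [l1, l2] q 1 T.entry (q - 1) = stB T l1 l2 p0)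
    (hl1 : 1 ≤ l1) :
    kpromote [l1, l2] q T.entry (0, l1 - 1) = q := by
  have hsh : inShape [l1, l2] ((0, l1 - 1) : Cell) := by
    rw [inShape_iff]; left; exact ⟨rfl, by omega⟩
  have hc : inShape [l1, l2] ((0, l1 - 1) : Cell) ∧ stB T l1 l2 p0 (0, l1 - 1) = 0 :=
    ⟨hsh, stB_0bul T (by omega)⟩
  have hg : gromote [l1, l2] q 1 T.entry (0, l1 - 1) = 1 := by
    simp only [gromote]
    rw [hfin, if_pos hc]
  simp only [kpromote]
  rw [if_pos hsh, hg, if_pos rfl]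

lemma kp_row2_lt_B (hll : l2 ≤ l1)
    (hfin : iterSub [l1, l2] q 1 T.entry (q - 1) = stB T l1 l2 p0)
    (hp0l : p0 ≤ l2) (j : ℕ) (hj : j + 1 < p0) :
    kpromote [l1, l2] q T.entry (1, j) = T.entry (1, j) - 1 := by
  have hsh : inShape [l1, l2] ((1, j) : Cell) := by
    rw [inShape_iff]; right; exact ⟨rfl, by omega⟩
  have hge := entry_ge_row2 T hll j (by omega)
  have hg : gromote [l1, l2] q 1 T.entry (1, j) = T.entry (1, j) := by
    simp only [gromote]
    rw [hfin, stB_1lt T hj hp0l, if_neg (by rintro ⟨-, h⟩; omega)]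
  simp only [kpromote]
  rw [if_pos hsh, hg, if_neg (by omega)]

lemma kp_row2_mid_B (hll : l2 ≤ l1)
    (hfin : iterSub [l1, l2] q 1 T.entry (q - 1) = stB T l1 l2 p0)
    (j : ℕ) (h1 : p0 ≤ j + 1) (h2 : j + 1 < l2) :
    kpromote [l1, l2] q T.entry (1, j) = T.entry (1, j + 1) - 1 := by
  have hsh : inShape [l1, l2] ((1, j) : Cell) := by
    rw [inShape_iff]; right; exact ⟨rfl, by omega⟩
  have hge := entry_ge_row2 T hll (j+1) h2
  have hg : gromote [l1, l2] q 1 T.entry (1, j) = T.entry (1, j + 1) := by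
    simp only [gromote]
    rw [hfin, stB_1mid T h1 h2, if_neg (by rintro ⟨-, h⟩; omega)]
  simp only [kpromote]
  rw [if_pos hsh, hg, if_neg (by omega)]

lemma kp_row2_last_B (hfin : iterSub [l1, l2] q 1 T.entry (q - 1) = stB T l1 l2 p0)
    (hl2 : 1 ≤ l2) :
    kpromote [l1, l2] q T.entry (1, l2 - 1) = q := by
  have hsh : inShape [l1, l2] ((1, l2 - 1) : Cell) := by
    rw [inShape_iff]; right; exact ⟨rfl, by omega⟩
  have hc : inShape [l1, l2] ((1, l2 - 1) : Cell) ∧ stB T l1 l2 p0 (1, l2 - 1) = 0 :=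
    ⟨hsh, stB_1bul T (by omega)⟩
  have hg : gromote [l1, l2] q 1 T.entry (1, l2 - 1) = 1 := by
    simp only [gromote]
    rw [hfin, if_pos hc]
  simp only [kpromote]
  rw [if_pos hsh, hg, if_pos rfl]

lemma case2_main (hll : l2 ≤ l1) (jt : ℕ)
    (hw1 : rowSetW [l1, l2] T.entry 1 ≠ (∅ : Set ℕ))
    (hnb : ∀ j, 1 ≤ j → j ≤ q → ¬ isBalance [l1, l2] T.entry j)
    (hjt1 : 1 ≤ jt) (hjtq : jt ≤ q) (ht : isTeeter [l1, l2] T.entry jt)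
    (hmin : ∀ m, 1 ≤ m → m < jt → ¬ isTeeter [l1, l2] T.entry m) :
    rowSetW [l1, l2] T.entry jt = ({1, 2} : Set ℕ) ∧
    (∀ m, 1 ≤ m → m < q →
      rowSetW [l1, l2] (kpromote [l1, l2] q T.entry) m =
        (if m + 1 = jt then ({1} : Set ℕ) else rowSetW [l1, l2] T.entry (m + 1))) ∧
    rowSetW [l1, l2] (kpromote [l1, l2] q T.entry) q = ({1, 2} : Set ℕ) := by
  obtain ⟨hl1, h00, hq1⟩ := first_is_one T hll hw1
  have hm1 := row1_mono T
  have hm2 := row2_mono T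
  rw [isTeeter_iff] at ht
  obtain ⟨hta, htb, htc⟩ := ht
  obtain ⟨ha11', ha12', ha13'⟩ := (rcnt_exists_iff l1 _ hm1 jt hjt1).mp
    ((appearsRow1_iff T.entry jt).mp hta)
  obtain ⟨ha21', ha22', ha23'⟩ := (rcnt_exists_iff l2 _ hm2 jt hjt1).mp
    ((appearsRow2_iff T.entry jt).mp htb)
  have ha11 : 1 ≤ rcnt l1 (fun k => T.entry (0, k)) jt := ha11'
  have ha12 : rcnt l1 (fun k => T.entry (0, k)) jt - 1 < l1 := ha12'
  have ha13 : T.entry (0, rcnt l1 (fun k => T.entry (0, k)) jt - 1) = jt := ha13'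
  have ha21 : 1 ≤ rcnt l2 (fun k => T.entry (1, k)) jt := ha21'
  have ha22 : rcnt l2 (fun k => T.entry (1, k)) jt - 1 < l2 := ha22'
  have ha23 : T.entry (1, rcnt l2 (fun k => T.entry (1, k)) jt - 1) = jt := ha23'
  have hl2 : 1 ≤ l2 := by omega
  have hjt2 : 2 ≤ jt := by
    have := entry_ge_row2 T hll _ ha22
    omega
  have hPpred : rcnt l1 (fun k => T.entry (0, k)) (jt - 1) =
      rcnt l1 (fun k => T.entry (0, k)) jt - 1 :=
    rcnt_pred l1 _ hm1 jt _ hjt1 ha12 ha13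
  -- state just after processing the value jt : the split
  have hsplit : iterSub [l1, l2] q 1 T.entry (jt - 1) =
      stB T (rcnt l1 (fun k => T.entry (0, k)) jt)
        (rcnt l2 (fun k => T.entry (1, k)) jt) (rcnt l2 (fun k => T.entry (1, k)) jt) := by
    have hA := iterA_master T hll hl1 h00 hnb (jt - 1) (by omega)
      (fun j hj1 hj2 => hmin j hj1 (by omega)) (jt - 1) (by omega) (le_refl _)
    have hstep : iterSub [l1, l2] q 1 T.entry (jt - 1) =
        substep [l1, l2] jt (stA T (rcnt l1 (fun k => T.entry (0, k)) (jt - 1))) := by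
      rw [show jt - 1 = (jt - 2) + 1 by omega]
      show substep [l1, l2] (cyc q 1 (jt - 2 + 1)) (iterSub [l1, l2] q 1 T.entry (jt - 2)) = _
      rw [show jt - 2 + 1 = jt - 1 by omega, cyc_one (jt - 1) (by omega) (by omega),
        show jt - 1 + 1 = jt by omega, show jt - 2 = jt - 1 - 1 by omega, hA]
    rw [hstep]
    have e1 : rcnt l1 (fun k => T.entry (0, k)) jt =
        rcnt l1 (fun k => T.entry (0, k)) (jt - 1) + 1 := by omega
    have e2 : rcnt l2 (fun k => T.entry (1, k)) jt =
        rcnt l1 (fun k => T.entry (0, k)) (jt - 1) := by omega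
    rw [e1, e2]
    apply stepSplit T (by omega) (by omega)
    · constructor
      · omega
      · rw [hPpred]
        exact ha13
    · constructor
      · omega
      · rw [hPpred, show rcnt l1 (fun k => T.entry (0, k)) jt - 1 - 1 =
          rcnt l2 (fun k => T.entry (1, k)) jt - 1 by omega]
        exact ha23
  -- phase B induction
  have hP1 : rcnt l1 (fun k => T.entry (0, k)) 1 = 1 := rcnt_of_pos l1 _ hm1 0 1 hl1 h00
  have hB : ∀ d, jt + d ≤ q → iterSub [l1, l2] q 1 T.entry (jt + d - 1) =
      stB T (rcnt l1 (fun k => T.entry (0, k)) (jt + d))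
        (rcnt l2 (fun k => T.entry (1, k)) (jt + d)) (rcnt l2 (fun k => T.entry (1, k)) jt) := by
    intro d
    induction d with
    | zero => intro _; simpa using hsplit
    | succ n ih =>
      intro hdq
      have hih := ih (by omega)
      have hp1 : 1 ≤ rcnt l1 (fun k => T.entry (0, k)) (jt + n) := by
        have := rcnt_mono l1 _ hm1 (show 1 ≤ jt + n by omega)
        omega
      have hpl := rcnt_le l1 _ hm1 (jt + n)
      have hp01 : 1 ≤ rcnt l2 (fun k => T.entry (1, k)) jt := ha21
      have hp0r : rcnt l2 (fun k => T.entry (1, k)) jt ≤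
          rcnt l2 (fun k => T.entry (1, k)) (jt + n) :=
        rcnt_mono l2 _ hm2 (by omega)
      have hrl := rcnt_le l2 _ hm2 (jt + n)
      have hrp : rcnt l2 (fun k => T.entry (1, k)) (jt + n) <
          rcnt l1 (fun k => T.entry (0, k)) (jt + n) :=
        PQ_lt T hll hl1 h00 hnb (jt + n) (by omega) (by omega)
      have hQle := rcnt_succ_le l2 _ hm2 (jt + n)
      have hno3 : ¬ (rcnt l2 (fun k => T.entry (1, k)) (jt + n) + 1 <
            rcnt l1 (fun k => T.entry (0, k)) (jt + n) ∧
          rcnt l1 (fun k => T.entry (0, k)) (jt + n) - 1 < l2 ∧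
          T.entry (1, rcnt l1 (fun k => T.entry (0, k)) (jt + n) - 1) = jt + n + 1) := by
        rintro ⟨ha, hb, hc⟩
        have := rcnt_of_pos l2 _ hm2 _ (jt + n + 1) hb hc
        omega
      have hstep : iterSub [l1, l2] q 1 T.entry (jt + (n + 1) - 1) =
          substep [l1, l2] (jt + n + 1)
            (stB T (rcnt l1 (fun k => T.entry (0, k)) (jt + n))
              (rcnt l2 (fun k => T.entry (1, k)) (jt + n))
              (rcnt l2 (fun k => T.entry (1, k)) jt)) := by
        rw [show jt + (n + 1) - 1 = (jt + n - 1) + 1 by omega]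
        show substep [l1, l2] (cyc q 1 (jt + n - 1 + 1)) (iterSub [l1, l2] q 1 T.entry (jt + n - 1)) = _
        rw [show jt + n - 1 + 1 = jt + n by omega, cyc_one (jt + n) (by omega) (by omega), hih]
      rw [hstep, show jt + (n + 1) = (jt + n) + 1 by omega]
      by_cases hc1 : rcnt l1 (fun k => T.entry (0, k)) (jt + n) < l1 ∧
          T.entry (0, rcnt l1 (fun k => T.entry (0, k)) (jt + n)) = jt + n + 1
      · by_cases hc2 : rcnt l2 (fun k => T.entry (1, k)) (jt + n) < l2 ∧
            T.entry (1, rcnt l2 (fun k => T.entry (1, k)) (jt + n)) = jt + n + 1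
        · rw [rcnt_succ_mem l1 _ hm1 _ hc1.1 hc1.2, rcnt_succ_mem l2 _ hm2 _ hc2.1 hc2.2]
          exact stepB_mm T hp1 hpl hp01 hp0r hrl hrp hno3 hc1 hc2
        · rw [rcnt_succ_mem l1 _ hm1 _ hc1.1 hc1.2, rcnt_succ_not_mem l2 _ hm2 _ hc2]
          exact stepB_mn T hp1 hpl hp01 hp0r hrl hrp hno3 hc1 hc2
      · by_cases hc2 : rcnt l2 (fun k => T.entry (1, k)) (jt + n) < l2 ∧
            T.entry (1, rcnt l2 (fun k => T.entry (1, k)) (jt + n)) = jt + n + 1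
        · have hne : rcnt l2 (fun k => T.entry (1, k)) (jt + n) + 1 ≠
              rcnt l1 (fun k => T.entry (0, k)) (jt + n) := by
            intro he
            have hPs := rcnt_succ_not_mem l1 _ hm1 _ hc1
            have hQs := rcnt_succ_mem l2 _ hm2 _ hc2.1 hc2.2
            have hb := hnb (jt + n + 1) (by omega) (by omega)
            rw [isBalance_iff] at hb
            omega
          rw [rcnt_succ_not_mem l1 _ hm1 _ hc1, rcnt_succ_mem l2 _ hm2 _ hc2.1 hc2.2]
          exact stepB_nm T hp1 hpl hp01 hp0r hrl hrp hno3 hc1 hc2 hne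
        · rw [rcnt_succ_not_mem l1 _ hm1 _ hc1, rcnt_succ_not_mem l2 _ hm2 _ hc2]
          exact stepB_nn T hp1 hpl hp01 hp0r hrl hrp hno3 hc1 hc2
  have hfin : iterSub [l1, l2] q 1 T.entry (q - 1) =
      stB T l1 l2 (rcnt l2 (fun k => T.entry (1, k)) jt) := by
    have h := hB (q - jt) (by omega)
    rw [show jt + (q - jt) = q by omega] at h
    rw [h, rcnt_full_row1 T, rcnt_full_row2 T]
  have hp0l : rcnt l2 (fun k => T.entry (1, k)) jt ≤ l2 := rcnt_le l2 _ hm2 jt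
  refine ⟨?_, ?_, ?_⟩
  · exact rowSetW_pair T.entry jt ⟨_, ha12, ha13⟩ ⟨_, ha22, ha23⟩
  · intro m hmge hmq
    by_cases hmjt : m + 1 = jt
    · rw [if_pos hmjt]
      apply rowSetW_single
      · -- jt appears in row 1 at index  P jt - 1 ≥ 1
        have hne0 : rcnt l1 (fun k => T.entry (0, k)) jt - 1 ≠ 0 := by
          intro he
          rw [he, h00] at ha13
          omega
        refine ⟨rcnt l1 (fun k => T.entry (0, k)) jt - 1 - 1, by omega, ?_⟩
        rw [kp_row1_lt_B T hfin _ (by omega),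
          show rcnt l1 (fun k => T.entry (0, k)) jt - 1 - 1 + 1 =
            rcnt l1 (fun k => T.entry (0, k)) jt - 1 by omega, ha13]
        omega
      · rintro ⟨j, hj, he⟩
        by_cases hcase : j + 1 < rcnt l2 (fun k => T.entry (1, k)) jt
        · rw [kp_row2_lt_B T hll hfin hp0l j hcase] at he
          have hge := entry_ge_row2 T hll j (by omega)
          have hmono := hm2 j (rcnt l2 (fun k => T.entry (1, k)) jt - 1) (by omega) ha22
          omega
        · by_cases hcase2 : j + 1 < l2
          · rw [kp_row2_mid_B T hll hfin j (by omega) hcase2] at he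
            have hge := entry_ge_row2 T hll (j+1) hcase2
            have hmono := hm2 (rcnt l2 (fun k => T.entry (1, k)) jt - 1) (j+1) (by omega) hcase2
            rw [ha23] at hmono
            omega
          · rw [show j = l2 - 1 by omega, kp_row2_last_B T hfin hl2] at he
            omega
    · rw [if_neg hmjt]
      apply rowSetW_ext
      · constructor
        · rintro ⟨j, hj, he⟩
          by_cases hjl : j + 1 < l1
          · rw [kp_row1_lt_B T hfin j hjl] at he
            have hge := entry_ge_row1 T (j+1) hjl
            exact ⟨j + 1, hjl, by omega⟩
          · rw [show j = l1 - 1 by omega, kp_row1_last_B T hfin hl1] at he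
            omega
        · rintro ⟨j, hj, he⟩
          have hj1 : 1 ≤ j := by
            by_contra hc
            rw [show j = 0 by omega, h00] at he
            omega
          refine ⟨j - 1, by omega, ?_⟩
          rw [kp_row1_lt_B T hfin (j - 1) (by omega), show j - 1 + 1 = j by omega, he]
          omega
      · constructor
        · rintro ⟨j, hj, he⟩
          by_cases hcase : j + 1 < rcnt l2 (fun k => T.entry (1, k)) jt
          · rw [kp_row2_lt_B T hll hfin hp0l j hcase] at he
            have hge := entry_ge_row2 T hll j hj
            exact ⟨j, hj, by omega⟩
          · by_cases hcase2 : j + 1 < l2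
            · rw [kp_row2_mid_B T hll hfin j (by omega) hcase2] at he
              have hge := entry_ge_row2 T hll (j+1) hcase2
              exact ⟨j + 1, hcase2, by omega⟩
            · rw [show j = l2 - 1 by omega, kp_row2_last_B T hfin hl2] at he
              omega
        · rintro ⟨j, hj, he⟩
          have hjne : j ≠ rcnt l2 (fun k => T.entry (1, k)) jt - 1 := by
            intro hje
            rw [hje, ha23] at he
            omega
          by_cases hcase : j + 1 < rcnt l2 (fun k => T.entry (1, k)) jt
          · refine ⟨j, by omega, ?_⟩
            rw [kp_row2_lt_B T hll hfin hp0l j hcase, he]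
            omega
          · have hjge : rcnt l2 (fun k => T.entry (1, k)) jt ≤ j := by omega
            refine ⟨j - 1, by omega, ?_⟩
            rw [kp_row2_mid_B T hll hfin (j - 1) (by omega) (by omega),
              show j - 1 + 1 = j by omega, he]
            omega
  · exact rowSetW_pair _ q
      ⟨l1 - 1, by omega, kp_row1_last_B T hfin hl1⟩
      ⟨l2 - 1, by omega, kp_row2_last_B T hfin hl2⟩

end Case2

/-- two-row K-promotion, the remaining cases: no balance point and no
teetering point; no balance point but a first teetering point `j_t`; and `w_1 = ∅`. -/
theorem two_row_Kpromotion_no_balance_cases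
    (l1 l2 q : ℕ) (hll : l2 ≤ l1) (T : IncTab [l1, l2] q) :
    ((rowSetW [l1, l2] T.entry 1 ≠ (∅ : Set ℕ) ∧
      (∀ j, 1 ≤ j → j ≤ q → ¬ isBalance [l1, l2] T.entry j) ∧
      (∀ j, 1 ≤ j → j ≤ q → ¬ isTeeter [l1, l2] T.entry j)) →
      (∀ m, 1 ≤ m → m < q →
        rowSetW [l1, l2] (kpromote [l1, l2] q T.entry) m =
          rowSetW [l1, l2] T.entry (m + 1)) ∧
      rowSetW [l1, l2] (kpromote [l1, l2] q T.entry) q = ({1} : Set ℕ)) ∧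
    (∀ jt : ℕ,
      (rowSetW [l1, l2] T.entry 1 ≠ (∅ : Set ℕ) ∧
        (∀ j, 1 ≤ j → j ≤ q → ¬ isBalance [l1, l2] T.entry j) ∧
        1 ≤ jt ∧ jt ≤ q ∧ isTeeter [l1, l2] T.entry jt ∧
        (∀ m, 1 ≤ m → m < jt → ¬ isTeeter [l1, l2] T.entry m)) →
      rowSetW [l1, l2] T.entry jt = ({1, 2} : Set ℕ) ∧
      (∀ m, 1 ≤ m → m < q →
        rowSetW [l1, l2] (kpromote [l1, l2] q T.entry) m =
          (if m + 1 = jt then ({1} : Set ℕ) else rowSetW [l1, l2] T.entry (m + 1))) ∧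
      rowSetW [l1, l2] (kpromote [l1, l2] q T.entry) q = ({1, 2} : Set ℕ)) ∧
    (rowSetW [l1, l2] T.entry 1 = (∅ : Set ℕ) →
      (∀ m, 1 ≤ m → m < q →
        rowSetW [l1, l2] (kpromote [l1, l2] q T.entry) m =
          rowSetW [l1, l2] T.entry (m + 1)) ∧
      rowSetW [l1, l2] (kpromote [l1, l2] q T.entry) q = (∅ : Set ℕ)) := by
  refine ⟨?_, ?_, ?_⟩
  · rintro ⟨hw1, hnb, hnt⟩
    exact case1_main T hll hw1 hnb hnt
  · rintro jt ⟨hw1, hnb, hjt1, hjtq, ht, hmin⟩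
    exact case2_main T hll jt hw1 hnb hjt1 hjtq ht hmin
  · intro hw
    exact case3_main T hw
end

section
/- Let T ∈ Inc^q(2 × c) with lattice word w (over subsets of {1,2}) and associated noncrossing set partition π(T); let B_1 be the block containing 1. Then: (a) w_1 = ∅ iff |B_1| = 1; (b) if w_1 ≠ ∅, the first balance point of w equals max B_1; (c) if w_1 ≠ ∅, there is a teetering point before the first balance point iff |B_1| > 2; and (d) in that case the teetering points before the first balance point are exactly the elements of B_1 \ {1, max B_1}, so the first such teetering point is min(B_1 \ {1}). -/
open Classical

namespace TeeterAux

/-! ### Block machinery for a noncrossing partition relation -/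

noncomputable def blockF (q : ℕ) (R : ℕ → ℕ → Prop) (v : ℕ) : Finset ℕ :=
  (Finset.Icc 1 q).filter (fun u => R v u)

noncomputable def bmax (q : ℕ) (R : ℕ → ℕ → Prop) (v : ℕ) : ℕ :=
  (insert v (blockF q R v)).max' (Finset.insert_nonempty _ _)

noncomputable def bmin (q : ℕ) (R : ℕ → ℕ → Prop) (v : ℕ) : ℕ :=
  (insert v (blockF q R v)).min' (Finset.insert_nonempty _ _)

variable {q : ℕ} {R : ℕ → ℕ → Prop} {v u : ℕ}

lemma R_of_mem (hv : R v v) (hu : u ∈ insert v (blockF q R v)) : R v u := by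
  rcases Finset.mem_insert.mp hu with h | h
  · subst h; exact hv
  · exact (Finset.mem_filter.mp h).2

lemma R_bmax (hv : R v v) : R v (bmax q R v) := R_of_mem hv (Finset.max'_mem _ _)

lemma R_bmin (hv : R v v) : R v (bmin q R v) := R_of_mem hv (Finset.min'_mem _ _)

lemma le_bmax (hR : IsNCPartition q R) (h : R v u) : u ≤ bmax q R v := by
  refine Finset.le_max' _ _ (Finset.mem_insert_of_mem (Finset.mem_filter.mpr ⟨?_, h⟩))
  exact Finset.mem_Icc.mpr ⟨(hR.1 v u h).2.2.1, (hR.1 v u h).2.2.2⟩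

lemma bmin_le (hR : IsNCPartition q R) (h : R v u) : bmin q R v ≤ u := by
  refine Finset.min'_le _ _ (Finset.mem_insert_of_mem (Finset.mem_filter.mpr ⟨?_, h⟩))
  exact Finset.mem_Icc.mpr ⟨(hR.1 v u h).2.2.1, (hR.1 v u h).2.2.2⟩

end TeeterAux
namespace TeeterAux

/-! ### Openers, closers, middles of the lattice word -/

noncomputable def opF (lam : List ℕ) (f : Cell → ℕ) (j : ℕ) : Finset ℕ :=
  (Finset.Icc 1 j).filter (fun v => appearsRow lam f 1 v ∧ ¬ appearsRow lam f 2 v)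

noncomputable def clF (lam : List ℕ) (f : Cell → ℕ) (j : ℕ) : Finset ℕ :=
  (Finset.Icc 1 j).filter (fun v => appearsRow lam f 2 v ∧ ¬ appearsRow lam f 1 v)

noncomputable def midF (lam : List ℕ) (f : Cell → ℕ) (j : ℕ) : Finset ℕ :=
  (Finset.Icc 1 j).filter (fun v => appearsRow lam f 1 v ∧ appearsRow lam f 2 v)

lemma cnt1_split (lam : List ℕ) (f : Cell → ℕ) (j : ℕ) :
    cnt lam f 1 j = (opF lam f j).card + (midF lam f j).card := by
  classical
  unfold cnt opF midF
  rw [Finset.filter_congr_decidable, Finset.filter_congr_decidable, Finset.filter_congr_decidable]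
  rw [← Finset.filter_filter, ← Finset.filter_filter, add_comm]
  exact (Finset.card_filter_add_card_filter_not
    (s := (Finset.Icc 1 j).filter (fun v => appearsRow lam f 1 v))
    (p := fun v => appearsRow lam f 2 v)).symm

lemma cnt2_split (lam : List ℕ) (f : Cell → ℕ) (j : ℕ) :
    cnt lam f 2 j = (clF lam f j).card + (midF lam f j).card := by
  classical
  have hmid : (midF lam f j) = ((Finset.Icc 1 j).filter (fun v => appearsRow lam f 2 v)).filter
      (fun v => appearsRow lam f 1 v) := by
    unfold midF
    rw [Finset.filter_congr_decidable, Finset.filter_filter]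
    exact Finset.filter_congr (fun x _ => and_comm)
  have hcl : (clF lam f j) = ((Finset.Icc 1 j).filter (fun v => appearsRow lam f 2 v)).filter
      (fun v => ¬ appearsRow lam f 1 v) := by
    unfold clF
    rw [Finset.filter_congr_decidable, Finset.filter_filter]
  rw [hmid, hcl]
  unfold cnt
  rw [Finset.filter_congr_decidable, add_comm]
  exact (Finset.card_filter_add_card_filter_not
    (p := fun v => appearsRow lam f 1 v)).symm

end TeeterAux
namespace TeeterAux

variable {lam : List ℕ} {f : Cell → ℕ} {q : ℕ} {R : ℕ → ℕ → Prop}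

lemma mem_opF {j v : ℕ} : v ∈ opF lam f j ↔
    (1 ≤ v ∧ v ≤ j) ∧ appearsRow lam f 1 v ∧ ¬ appearsRow lam f 2 v := by
  classical
  unfold opF
  rw [Finset.filter_congr_decidable, Finset.mem_filter, Finset.mem_Icc]

lemma mem_clF {j v : ℕ} : v ∈ clF lam f j ↔
    (1 ≤ v ∧ v ≤ j) ∧ appearsRow lam f 2 v ∧ ¬ appearsRow lam f 1 v := by
  classical
  unfold clF
  rw [Finset.filter_congr_decidable, Finset.mem_filter, Finset.mem_Icc]

/-- Injection from closers to openers: avoiding blocks still "open" at `j`. -/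
lemma lemA (hR : IsNCPartition q R) (hcompat : BlockCompat lam q f R)
    (happ : ∀ r v, appearsRow lam f r v → 1 ≤ v ∧ v ≤ q)
    (j : ℕ) (S : Finset ℕ) (hS : S ⊆ opF lam f j)
    (hSmax : ∀ s ∈ S, ∃ u, R s u ∧ j < u) :
    (clF lam f j).card + S.card ≤ (opF lam f j).card := by
  classical
  set g : ℕ → ℕ := bmin q R with hg
  have key : ∀ v ∈ clF lam f j, (g v ∈ opF lam f j) ∧ (∀ w, R v w → w ≤ v) ∧ R v (g v) := by
    intro v hv
    rw [mem_clF] at hv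
    obtain ⟨⟨hv1, hvj⟩, ha2, ha1⟩ := hv
    obtain ⟨hvl, hvq⟩ := happ 2 v ha2
    have hRvv : R v v := hR.2.1 v hvl hvq
    have hclose := ((hcompat v hvl hvq).2.2.1).mpr ⟨ha2, ha1⟩
    obtain ⟨⟨u0, hu0, hu0lt⟩, hmax⟩ := hclose
    have hRvx : R v (g v) := R_bmin hRvv
    have hxlt : g v < v := lt_of_le_of_lt (bmin_le hR hu0) hu0lt
    have hxmin : ∀ w, R (g v) w → g v ≤ w := by
      intro w hw
      exact bmin_le hR (hR.2.2.2.1 v (g v) w hRvx hw)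
    have hxb := hR.1 v (g v) hRvx
    have hxop := ((hcompat (g v) hxb.2.2.1 hxb.2.2.2).2.1).mp
      ⟨⟨v, hR.2.2.1 v (g v) hRvx, hxlt⟩, hxmin⟩
    exact ⟨mem_opF.mpr ⟨⟨hxb.2.2.1, le_trans (le_of_lt hxlt) hvj⟩, hxop⟩, hmax, hRvx⟩
  have hinj : Set.InjOn g (clF lam f j) := by
    intro v hv v' hv' heq
    have h1 := (key v hv); have h2 := (key v' hv')
    have hRv : R v (g v) := h1.2.2
    have hRv' : R v' (g v) := heq ▸ h2.2.2
    have hvv' : R v v' := hR.2.2.2.1 v (g v) v' hRv (hR.2.2.1 v' (g v) hRv')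
    exact le_antisymm (h2.2.1 v (hR.2.2.1 v v' hvv')) (h1.2.1 v' hvv')
  have hsub : (clF lam f j).image g ∪ S ⊆ opF lam f j := by
    intro x hx
    rcases Finset.mem_union.mp hx with hx | hx
    · obtain ⟨v, hv, rfl⟩ := Finset.mem_image.mp hx
      exact (key v hv).1
    · exact hS hx
  have hdisj : Disjoint ((clF lam f j).image g) S := by
    rw [Finset.disjoint_left]
    intro x hx hxS
    obtain ⟨v, hv, rfl⟩ := Finset.mem_image.mp hx
    obtain ⟨u, hu, hju⟩ := hSmax _ hxS
    have hRvu : R v u := hR.2.2.2.1 v (g v) u (key v hv).2.2 hu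
    have huv := (key v hv).2.1 u hRvu
    have hvj := (mem_clF.mp hv).1.2
    omega
  calc (clF lam f j).card + S.card
      = ((clF lam f j).image g).card + S.card := by
        rw [Finset.card_image_of_injOn hinj]
    _ = ((clF lam f j).image g ∪ S).card := (Finset.card_union_of_disjoint hdisj).symm
    _ ≤ (opF lam f j).card := Finset.card_le_card hsub

/-- Injection from openers to closers: when all openers outside `E` have closed by `j`. -/
lemma lemB (hR : IsNCPartition q R) (hcompat : BlockCompat lam q f R)
    (happ : ∀ r v, appearsRow lam f r v → 1 ≤ v ∧ v ≤ q)
    (j : ℕ) (E : Finset ℕ)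
    (hE : ∀ x ∈ opF lam f j, x ∉ E → ∀ u, R x u → u ≤ j) :
    (opF lam f j).card ≤ (clF lam f j).card + E.card := by
  classical
  set g : ℕ → ℕ := bmax q R with hg
  have key : ∀ x ∈ opF lam f j \ E, (g x ∈ clF lam f j) ∧ (∀ w, R x w → x ≤ w) ∧ R x (g x) := by
    intro x hx
    obtain ⟨hx, hxE⟩ := Finset.mem_sdiff.mp hx
    obtain ⟨⟨hx1, hxj⟩, ha1, ha2⟩ := mem_opF.mp hx
    obtain ⟨hxl, hxq⟩ := happ 1 x ha1
    have hRxx : R x x := hR.2.1 x hxl hxq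
    have hopen := ((hcompat x hxl hxq).2.1).mpr ⟨ha1, ha2⟩
    obtain ⟨⟨u0, hu0, hu0lt⟩, hmin⟩ := hopen
    have hRxy : R x (g x) := R_bmax hRxx
    have hylt : x < g x := lt_of_lt_of_le hu0lt (le_bmax hR hu0)
    have hymax : ∀ w, R (g x) w → w ≤ g x := fun w hw =>
      le_bmax hR (hR.2.2.2.1 x (g x) w hRxy hw)
    have hyb := hR.1 x (g x) hRxy
    have hycl := ((hcompat (g x) hyb.2.2.1 hyb.2.2.2).2.2.1).mp
      ⟨⟨x, hR.2.2.1 x (g x) hRxy, hylt⟩, hymax⟩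
    have hyj : g x ≤ j := hE x hx hxE (g x) hRxy
    exact ⟨mem_clF.mpr ⟨⟨hyb.2.2.1, hyj⟩, hycl⟩, hmin, hRxy⟩
  have hinj : Set.InjOn g ((opF lam f j \ E) : Finset ℕ) := by
    intro x hx x' hx' heq
    have h1 := key x hx; have h2 := key x' hx'
    have hRx : R x (g x) := h1.2.2
    have hRx' : R x' (g x) := heq ▸ h2.2.2
    have hxx' : R x x' := hR.2.2.2.1 x (g x) x' hRx (hR.2.2.1 x' (g x) hRx')
    exact le_antisymm (h1.2.1 x' hxx') (h2.2.1 x (hR.2.2.1 x x' hxx'))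
  have h1 : ((opF lam f j \ E)).card ≤ (clF lam f j).card := by
    rw [← Finset.card_image_of_injOn hinj]
    apply Finset.card_le_card
    intro y hy
    obtain ⟨x, hx, rfl⟩ := Finset.mem_image.mp hy
    exact (key x hx).1
  calc (opF lam f j).card ≤ (opF lam f j \ E).card + E.card :=
      Finset.card_le_card_sdiff_add_card
    _ ≤ (clF lam f j).card + E.card := by omega

end TeeterAux
namespace TeeterAux

lemma getD_rep (c i : ℕ) : (List.replicate 2 c).getD i 0 = if i < 2 then c else 0 := by
  match i with
  | 0 => rfl
  | 1 => rfl
  | (n+2) => simp [List.replicate, List.getD]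

lemma inShape_rep {c : ℕ} {p : Cell} : inShape (List.replicate 2 c) p ↔ p.1 < 2 ∧ p.2 < c := by
  unfold inShape
  rw [getD_rep]
  by_cases h : p.1 < 2 <;> simp [h]

lemma happ_T {c q : ℕ} (T : IncTab (List.replicate 2 c) q) :
    ∀ r v, appearsRow (List.replicate 2 c) T.entry r v → 1 ≤ v ∧ v ≤ q := by
  rintro r v ⟨hr, j, hsh, hfv⟩
  exact ⟨hfv ▸ T.entry_pos _ hsh, hfv ▸ T.entry_le _ hsh⟩

lemma not_a2_one {c q : ℕ} (T : IncTab (List.replicate 2 c) q) :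
    ¬ appearsRow (List.replicate 2 c) T.entry 2 1 := by
  rintro ⟨-, j, hsh, hfv⟩
  have hsh' : inShape (List.replicate 2 c) (1, j) := hsh
  have hsh0 : inShape (List.replicate 2 c) (0, j) := by
    rw [inShape_rep] at hsh' ⊢
    exact ⟨by omega, hsh'.2⟩
  have h1 : T.entry (0, j) < T.entry (0 + 1, j) := T.col_strict 0 j hsh'
  have h2 := T.entry_pos _ hsh0
  have hfv' : T.entry (1, j) = 1 := hfv
  simp only [Nat.zero_add] at h1
  omega

lemma a1_one {c q : ℕ} (T : IncTab (List.replicate 2 c) q)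
    (h : ∃ r, appearsRow (List.replicate 2 c) T.entry r 1) :
    appearsRow (List.replicate 2 c) T.entry 1 1 := by
  obtain ⟨r, hr1, j, hsh, hfv⟩ := h
  have hlt := (inShape_rep.mp hsh).1
  have : r = 1 ∨ r = 2 := by
    simp only at hlt
    omega
  rcases this with rfl | rfl
  · exact ⟨le_rfl, j, hsh, hfv⟩
  · exact absurd ⟨by norm_num, j, hsh, hfv⟩ (not_a2_one T)

lemma cell_iff {c : ℕ} (f : Cell → ℕ) (v : ℕ) :
    (∃ p : Cell, inShape (List.replicate 2 c) p ∧ f p = v) ↔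
    (appearsRow (List.replicate 2 c) f 1 v ∨ appearsRow (List.replicate 2 c) f 2 v) := by
  constructor
  · rintro ⟨⟨i, j⟩, hsh, hfv⟩
    have hlt := (inShape_rep.mp hsh).1
    have : i = 0 ∨ i = 1 := by simp only at hlt; omega
    rcases this with rfl | rfl
    · exact Or.inl ⟨le_rfl, j, hsh, hfv⟩
    · exact Or.inr ⟨by norm_num, j, hsh, hfv⟩
  · rintro (⟨-, j, hsh, hfv⟩ | ⟨-, j, hsh, hfv⟩)
    · exact ⟨(0, j), hsh, hfv⟩
    · exact ⟨(1, j), hsh, hfv⟩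

end TeeterAux
/-- for `T ∈ Inc^q(2 × c)` with noncrossing set partition `π(T)` and `B₁`
the block of `1`: (a) `w₁ = ∅` iff `B₁` is a singleton; (b) if `w₁ ≠ ∅` the first
balance point equals `max B₁`; (c) a teetering point occurs before it iff `|B₁| > 2`;
(d) in that case the teetering points before the first balance point are exactly
`B₁ \ {1, max B₁}`, and the first one is `min (B₁ \ {1})`. -/
theorem teetering_and_balance_are_the_first_block
    (c q : ℕ) (T : IncTab (List.replicate 2 c) q)
    (R : ℕ → ℕ → Prop) (hR : IsNCPartition q R)
    (hcompat : BlockCompat (List.replicate 2 c) q T.entry R) :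
    (rowSetW (List.replicate 2 c) T.entry 1 = (∅ : Set ℕ) ↔ ∀ u, R 1 u → u = 1) ∧
    (rowSetW (List.replicate 2 c) T.entry 1 ≠ (∅ : Set ℕ) →
      ∃ jb : ℕ, 1 ≤ jb ∧ jb ≤ q ∧
        isBalance (List.replicate 2 c) T.entry jb ∧
        (∀ m, 1 ≤ m → m < jb → ¬ isBalance (List.replicate 2 c) T.entry m) ∧
        (R 1 jb ∧ ∀ u, R 1 u → u ≤ jb) ∧
        ((∃ m, 1 ≤ m ∧ m < jb ∧ isTeeter (List.replicate 2 c) T.entry m) ↔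
          (∃ u u', R 1 u ∧ R 1 u' ∧ u ≠ 1 ∧ u' ≠ 1 ∧ u ≠ u')) ∧
        (∀ m, 1 ≤ m → m < jb →
          (isTeeter (List.replicate 2 c) T.entry m ↔ (R 1 m ∧ m ≠ 1 ∧ m ≠ jb))) ∧
        (∀ jt, (1 ≤ jt ∧ jt < jb ∧ isTeeter (List.replicate 2 c) T.entry jt ∧
            (∀ m, 1 ≤ m → m < jt → ¬ isTeeter (List.replicate 2 c) T.entry m)) →
          (R 1 jt ∧ jt ≠ 1 ∧ ∀ u, R 1 u → u ≠ 1 → jt ≤ u))) := by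
  classical
  have happ := TeeterAux.happ_T T
  constructor
  · -- part (a)
    rw [Set.eq_empty_iff_forall_notMem]
    constructor
    · intro hno u hu
      by_cases hq : 1 ≤ q
      · have hcell : ¬ ∃ p : Cell, inShape (List.replicate 2 c) p ∧ T.entry p = 1 := by
          intro hc
          rcases (TeeterAux.cell_iff T.entry 1).mp hc with h | h
          · exact hno 1 h
          · exact hno 2 h
        exact ((hcompat 1 le_rfl hq).1).mpr hcell u hu
      · have := (hR.1 1 u hu).2.1
        omega
    · intro hsing r hr
      have hrr : appearsRow (List.replicate 2 c) T.entry r 1 := hr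
      obtain ⟨hr1, j, hsh, hfv⟩ := hrr
      have hq : 1 ≤ q := (happ r 1 hr).2
      exact ((hcompat 1 le_rfl hq).1).mp hsing ⟨(r - 1, j), hsh, hfv⟩
  · -- part (b)
    intro hne
    obtain ⟨r, hr⟩ := Set.nonempty_iff_ne_empty.mpr hne
    have ha1 : appearsRow (List.replicate 2 c) T.entry 1 1 := TeeterAux.a1_one T ⟨r, hr⟩
    have ha2 : ¬ appearsRow (List.replicate 2 c) T.entry 2 1 := TeeterAux.not_a2_one T
    have hq : 1 ≤ q := (happ 1 1 ha1).2
    have hop := ((hcompat 1 le_rfl hq).2.1).mpr ⟨ha1, ha2⟩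
    obtain ⟨⟨w, hw, hw1⟩, hmin1⟩ := hop
    have hR11 : R 1 1 := hR.2.1 1 le_rfl hq
    set b := TeeterAux.bmax q R 1 with hbdef
    have hR1b : R 1 b := TeeterAux.R_bmax hR11
    have hble : ∀ u, R 1 u → u ≤ b := fun u hu => TeeterAux.le_bmax hR hu
    have hb1 : 1 < b := lt_of_lt_of_le hw1 (hble w hw)
    have hbq : b ≤ q := (hR.1 1 b hR1b).2.2.2
    have hbmax : ∀ u, R b u → u ≤ b := fun u hu => hble u (hR.2.2.2.1 1 b u hR1b hu)
    have hbcl := ((hcompat b (by omega) hbq).2.2.1).mp ⟨⟨1, hR.2.2.1 1 b hR1b, hb1⟩, hbmax⟩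
    have hone_mem : ∀ j, 1 ≤ j → 1 ∈ TeeterAux.opF (List.replicate 2 c) T.entry j :=
      fun j hj => TeeterAux.mem_opF.mpr ⟨⟨le_rfl, hj⟩, ha1, ha2⟩
    -- strictly before b the word is strictly unbalanced
    have hdpos : ∀ m, 1 ≤ m → m < b →
        (TeeterAux.clF (List.replicate 2 c) T.entry m).card + 1 ≤ (TeeterAux.opF (List.replicate 2 c) T.entry m).card := by
      intro m hm hmb
      have h := TeeterAux.lemA hR hcompat happ m {1}
        (by intro s hs
            rw [Finset.mem_singleton] at hs
            subst hs
            exact hone_mem m hm)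
        (by intro s hs
            rw [Finset.mem_singleton] at hs
            subst hs
            exact ⟨b, hR1b, hmb⟩)
      rwa [Finset.card_singleton] at h
    -- balance at b
    have hbalb : (TeeterAux.opF (List.replicate 2 c) T.entry b).card = (TeeterAux.clF (List.replicate 2 c) T.entry b).card := by
      have hle1 : (TeeterAux.clF (List.replicate 2 c) T.entry b).card + (∅ : Finset ℕ).card ≤
          (TeeterAux.opF (List.replicate 2 c) T.entry b).card :=
        TeeterAux.lemA hR hcompat happ b ∅ (Finset.empty_subset _)
          (fun s hs => absurd hs (Finset.notMem_empty s))
      have hle2 : (TeeterAux.opF (List.replicate 2 c) T.entry b).card ≤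
          (TeeterAux.clF (List.replicate 2 c) T.entry b).card + (∅ : Finset ℕ).card := by
        apply TeeterAux.lemB hR hcompat happ b ∅
        intro x hx _ u hxu
        by_contra hub
        push_neg at hub
        obtain ⟨⟨hx1, hxb⟩, hxa1, hxa2⟩ := TeeterAux.mem_opF.mp hx
        have hxib : x ≠ b := fun h => hbcl.2 (h ▸ hxa1)
        obtain ⟨hxl, hxq⟩ := happ 1 x hxa1
        have hxmin := (((hcompat x hxl hxq).2.1).mpr ⟨hxa1, hxa2⟩).2
        by_cases hx1' : x = 1
        · subst hx1'
          have := hble u hxu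
          omega
        · have h1x : 1 < x := by omega
          have hxltb : x < b := by omega
          have hR1x : R 1 x := hR.2.2.2.2 1 b x u h1x hxltb hub hR1b hxu
          have := hxmin 1 (hR.2.2.1 1 x hR1x)
          omega
      simp only [Finset.card_empty, Nat.add_zero] at hle1 hle2
      omega
    -- middles of B₁ : upper bound
    have hmidle : ∀ m, 1 < m → m < b → R 1 m →
        (TeeterAux.opF (List.replicate 2 c) T.entry m).card ≤ (TeeterAux.clF (List.replicate 2 c) T.entry m).card + 1 := by
      intro m h1m hmb hR1m
      have h := TeeterAux.lemB hR hcompat happ m {1} ?_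
      · rwa [Finset.card_singleton] at h
      intro x hx hxE u hxu
      rw [Finset.mem_singleton] at hxE
      by_contra hum
      push_neg at hum
      obtain ⟨⟨hx1, hxm⟩, hxa1, hxa2⟩ := TeeterAux.mem_opF.mp hx
      obtain ⟨hxl, hxq⟩ := happ 1 x hxa1
      have hxmin := (((hcompat x hxl hxq).2.1).mpr ⟨hxa1, hxa2⟩).2
      have h1x : 1 < x := by omega
      have hR1x : R 1 x := by
        rcases eq_or_lt_of_le hxm with heq | hlt
        · subst heq
          exact hR1m
        · exact hR.2.2.2.2 1 m x u h1x hlt hum hR1m hxu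
      have := hxmin 1 (hR.2.2.1 1 x hR1x)
      omega
    -- the teetering characterization (component 7)
    have hteet : ∀ m, 1 ≤ m → m < b →
        (isTeeter (List.replicate 2 c) T.entry m ↔ (R 1 m ∧ m ≠ 1 ∧ m ≠ b)) := by
      intro m hm hmb
      constructor
      · intro ht
        obtain ⟨hma1, hma2, hcnt⟩ :
            appearsRow (List.replicate 2 c) T.entry 1 m ∧ appearsRow (List.replicate 2 c) T.entry 2 m ∧
              cnt (List.replicate 2 c) T.entry 1 m = cnt (List.replicate 2 c) T.entry 2 m + 1 := ht
        have hm1 : m ≠ 1 := fun h => ha2 (h ▸ hma2)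
        refine ⟨?_, hm1, by omega⟩
        by_contra hR1m
        obtain ⟨hml, hmq⟩ := happ 1 m hma1
        have hmid := ((hcompat m hml hmq).2.2.2).mpr ⟨hma1, hma2⟩
        obtain ⟨⟨d, hd, hdm⟩, ⟨e, he, hme⟩⟩ := hmid
        have hRmm := hR.2.1 m hml hmq
        set x := TeeterAux.bmin q R m with hxdef
        have hRmx : R m x := TeeterAux.R_bmin hRmm
        have hxm : x < m := lt_of_le_of_lt (TeeterAux.bmin_le hR hd) hdm
        have hxne1 : x ≠ 1 := fun h => hR1m (hR.2.2.1 m 1 (h ▸ hRmx))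
        have hxmin : ∀ w', R x w' → x ≤ w' := fun w' hw' =>
          TeeterAux.bmin_le hR (hR.2.2.2.1 m x w' hRmx hw')
        have hxb := hR.1 m x hRmx
        have hxop := ((hcompat x hxb.2.2.1 hxb.2.2.2).2.1).mp
          ⟨⟨m, hR.2.2.1 m x hRmx, hxm⟩, hxmin⟩
        have hSsub : ({1, x} : Finset ℕ) ⊆ TeeterAux.opF (List.replicate 2 c) T.entry m := by
          intro s hs
          rcases Finset.mem_insert.mp hs with rfl | hs
          · exact hone_mem m hm
          · rw [Finset.mem_singleton] at hs
            subst hs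
            exact TeeterAux.mem_opF.mpr ⟨⟨hxb.2.2.1, le_of_lt hxm⟩, hxop⟩
        have hSmax : ∀ s ∈ ({1, x} : Finset ℕ), ∃ u, R s u ∧ m < u := by
          intro s hs
          rcases Finset.mem_insert.mp hs with rfl | hs
          · exact ⟨b, hR1b, hmb⟩
          · rw [Finset.mem_singleton] at hs
            subst hs
            exact ⟨e, hR.2.2.2.1 x m e (hR.2.2.1 m x hRmx) he, hme⟩
        have hA := TeeterAux.lemA hR hcompat happ m _ hSsub hSmax
        rw [Finset.card_pair (Ne.symm hxne1)] at hA
        rw [TeeterAux.cnt1_split, TeeterAux.cnt2_split] at hcnt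
        omega
      · rintro ⟨hR1m, hm1, -⟩
        have h1m : 1 < m := by omega
        have hRm1 := hR.2.2.1 1 m hR1m
        have hRmb : R m b := hR.2.2.2.1 m 1 b hRm1 hR1b
        have hbnds := hR.1 1 m hR1m
        have hmid := ((hcompat m hbnds.2.2.1 hbnds.2.2.2).2.2.2).mp
          ⟨⟨1, hRm1, h1m⟩, ⟨b, hRmb, hmb⟩⟩
        have h1 := hdpos m hm hmb
        have h2 := hmidle m h1m hmb hR1m
        refine ⟨hmid.1, hmid.2, ?_⟩
        show cnt (List.replicate 2 c) T.entry 1 m = cnt (List.replicate 2 c) T.entry 2 m + 1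
        rw [TeeterAux.cnt1_split, TeeterAux.cnt2_split]
        omega
    refine ⟨b, by omega, hbq, ?_, ?_, ⟨hR1b, hble⟩, ?_, hteet, ?_⟩
    · show cnt (List.replicate 2 c) T.entry 1 b = cnt (List.replicate 2 c) T.entry 2 b
      rw [TeeterAux.cnt1_split, TeeterAux.cnt2_split]
      omega
    · intro m hm hmb hbal
      have hbal' : cnt (List.replicate 2 c) T.entry 1 m = cnt (List.replicate 2 c) T.entry 2 m := hbal
      have := hdpos m hm hmb
      rw [TeeterAux.cnt1_split, TeeterAux.cnt2_split] at hbal'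
      omega
    · constructor
      · rintro ⟨m, hm, hmb, ht⟩
        have h := (hteet m hm hmb).mp ht
        exact ⟨m, b, h.1, hR1b, h.2.1, by omega, h.2.2⟩
      · rintro ⟨u, u', hu, hu', hu1, hu'1, huu'⟩
        have hub := hble u hu
        have hu'b := hble u' hu'
        have h1u : 1 ≤ u := (hR.1 1 u hu).2.2.1
        have h1u' : 1 ≤ u' := (hR.1 1 u' hu').2.2.1
        rcases lt_or_gt_of_ne huu' with h | h
        · exact ⟨u, h1u, by omega,
            (hteet u h1u (by omega)).mpr ⟨hu, hu1, by omega⟩⟩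
        · exact ⟨u', h1u', by omega,
            (hteet u' h1u' (by omega)).mpr ⟨hu', hu'1, by omega⟩⟩
    · rintro jt ⟨hjt1, hjtb, hteetjt, hmin⟩
      have h := (hteet jt hjt1 hjtb).mp hteetjt
      refine ⟨h.1, h.2.1, ?_⟩
      intro u hu hu1
      by_contra hlt
      push_neg at hlt
      have hub := hble u hu
      have h1u : 1 ≤ u := (hR.1 1 u hu).2.2.1
      have hub' : u < b := by omega
      exact hmin u h1u hlt ((hteet u h1u hub').mpr ⟨hu, hu1, by omega⟩)
end
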